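/- arXiv:2005.10495 — 6 statements merged into one kernel-verified Lean document; each statement's English description precedes it below -/
import Mathlib

section
/- Consider the distributed Nash equilibrium seeking dynamics over a weight-balanced strongly connected digraph: Z : [0, ∞) → ℝ^{N×N} is differentiable and satisfies, for all t ≥ 0, Ż(t) = −α L Z(t) − diag(𝐅(Z(t))), where diag(v) denotes the diagonal matrix with entries v_1, …, v_N (entrywise: d/dt Z_{ij}(t) = −α Σ_k L_{ik} Z_{kj}(t) − δ_{ij} 𝐅(Z(t))_i). Assume: (i) F is l̲-strongly monotone and l̄-Lipschitz with l̲, l̄ > 0; (ii) 𝐅 is l_F-Lipschitz with l_F > 0, and set l = max(l̄, l_F); (iii) L is the Laplacian of a weight-balanced strongly connected digraph and λ₂ > 0 satisfies xᵀ Sym(L) x ≥ λ₂ ‖x‖² for all x ∈ ℝ^N with 1ᵀx = 0, where Sym(L) = (L + Lᵀ)/2; (iv) z* ∈ ℝ^N satisfies F(z*) = 0; (v) α > (1/λ₂)(l²/l̲ + l). Then there exist constants κ > 0 and ν > 0, independent of the initial condition, such that for all t ≥ 0, ‖Z(t) − 1 (z*)ᵀ‖ ≤ κ e^{−ν t} ‖Z(0)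 − 1 (z*)ᵀ‖; in particular every row Zⁱ(t) converges exponentially to z* as t → ∞. -/
open scoped BigOperators

/-- Euclidean norm of a vector in `ℝ^N`. -/
noncomputable def vnorm {N : ℕ} (x : Fin N → ℝ) : ℝ := Real.sqrt (∑ i, (x i) ^ 2)

/-- Frobenius norm of a matrix in `ℝ^{N×N}`. -/
noncomputable def mnorm {N : ℕ} (A : Matrix (Fin N) (Fin N) ℝ) : ℝ :=
  Real.sqrt (∑ i, ∑ j, (A i j) ^ 2)

lemma cs_sqrt {ι : Type*} [Fintype ι] (f g : ι → ℝ) :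
    ∑ i, f i * g i ≤ Real.sqrt (∑ i, f i ^ 2) * Real.sqrt (∑ i, g i ^ 2) := by
  have h := Finset.sum_mul_sq_le_sq_mul_sq Finset.univ f g
  have h1 : ∑ i, f i * g i ≤ |∑ i, f i * g i| := le_abs_self _
  rw [(Real.sqrt_sq_eq_abs (∑ i, f i * g i)).symm] at h1
  refine h1.trans ?_
  rw [← Real.sqrt_mul (by positivity)]
  exact Real.sqrt_le_sqrt h

set_option maxHeartbeats 1000000 in
lemma key_ineq
    (N : ℕ) (hN : 1 ≤ N)
    (L : Matrix (Fin N) (Fin N) ℝ)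
    (hLrow : ∀ i, ∑ j, L i j = 0) (hbal : ∀ j, ∑ i, L i j = 0)
    (F : (Fin N → ℝ) → (Fin N → ℝ)) (bF : Matrix (Fin N) (Fin N) ℝ → (Fin N → ℝ))
    (hbF : ∀ Z i, bF Z i = F (Z i) i)
    (lunder lbar lF : ℝ)
    (hmono : ∀ x y : Fin N → ℝ,
      lunder * (vnorm (x - y)) ^ 2 ≤ ∑ i, (F x i - F y i) * (x i - y i))
    (hFlip : ∀ x y : Fin N → ℝ, vnorm (F x - F y) ≤ lbar * vnorm (x - y))
    (hbFlip : ∀ Z W : Matrix (Fin N) (Fin N) ℝ,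
      vnorm (bF Z - bF W) ≤ lF * mnorm (Z - W))
    (lam2 : ℝ)
    (hlam2spec : ∀ x : Fin N → ℝ, (∑ i, x i) = 0 →
      lam2 * (vnorm x) ^ 2 ≤ ∑ i, ∑ j, x i * ((L i j + L j i) / 2) * x j)
    (zstar : Fin N → ℝ) (hzstar : F zstar = 0)
    (α : ℝ) (hα0 : 0 ≤ α)
    (hlbar_le : lbar ≤ max lbar lF) (hlF_le : lF ≤ max lbar lF)
    (hl0 : 0 ≤ max lbar lF)
    (m ν : ℝ) (hm : m = α * lam2 - max lbar lF)
    (hν : ∀ A B : ℝ, 0 ≤ A → 0 ≤ B →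
      ν * ((N : ℝ) * A ^ 2 + B ^ 2) ≤
        lunder * A ^ 2 + m * B ^ 2 - 2 * (max lbar lF) * A * B)
    (M : Matrix (Fin N) (Fin N) ℝ) :
    ∑ i, ∑ j, 2 * (M i j - zstar j) *
        (-α * (∑ k, L i k * M k j) - (if i = j then bF M i else 0))
      ≤ -(2 * ν) * ∑ i, ∑ j, (M i j - zstar j) ^ 2 := by
  have hNpos : (0:ℝ) < N := by exact_mod_cast Nat.lt_of_lt_of_le Nat.zero_lt_one hN
  set l : ℝ := max lbar lF with hl
  set zb : Fin N → ℝ := fun j => (∑ i, M i j) / N with hzb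
  set Y : Fin N → Fin N → ℝ := fun i j => M i j - zb j with hYdef
  set c : Fin N → ℝ := fun j => zb j - zstar j with hcdef
  have hYcol : ∀ j, ∑ i, Y i j = 0 := by
    intro j
    simp only [hYdef]
    rw [Finset.sum_sub_distrib, Finset.sum_const, Finset.card_univ, Fintype.card_fin]
    simp only [hzb]
    rw [nsmul_eq_mul, mul_div_assoc', mul_div_cancel_left₀ _ hNpos.ne', sub_self]
  have hE : ∀ i j, M i j - zstar j = Y i j + c j := by
    intro i j; simp only [hYdef, hcdef]; ring
  have hLM : ∀ i j, (∑ k, L i k * M k j) = ∑ k, L i k * Y k j := by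
    intro i j
    have h0 : ∑ k, L i k * M k j - ∑ k, L i k * Y k j = (∑ k, L i k) * zb j := by
      rw [Finset.sum_mul, ← Finset.sum_sub_distrib]
      refine Finset.sum_congr rfl fun k _ => ?_
      simp only [hYdef]; ring
    rw [hLrow i, zero_mul] at h0
    linarith
  -- main quantities
  set A : ℝ := Real.sqrt (∑ i, c i ^ 2) with hA
  set B2 : ℝ := ∑ i, ∑ j, Y i j ^ 2 with hB2
  set B : ℝ := Real.sqrt B2 with hB
  have hA0 : 0 ≤ A := Real.sqrt_nonneg _
  have hB0 : 0 ≤ B := Real.sqrt_nonneg _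
  have hB2nonneg : 0 ≤ B2 := by rw [hB2]; positivity
  have hA2 : A ^ 2 = ∑ i, c i ^ 2 := Real.sq_sqrt (by positivity)
  have hBsq : B ^ 2 = B2 := Real.sq_sqrt hB2nonneg
  -- step 1: rewrite the main sum
  set QA : ℝ := ∑ j, ∑ i, ∑ k, Y i j * (L i k * Y k j) with hQAdef
  set T : ℝ := ∑ i, (M i i - zstar i) * bF M i with hT
  have hsplit : ∑ i, ∑ j, 2 * (M i j - zstar j) *
        (-α * (∑ k, L i k * M k j) - (if i = j then bF M i else 0))
      = (-(2*α)) * QA - 2 * T := by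
    have e1 : ∀ i j, 2 * (M i j - zstar j) *
          (-α * (∑ k, L i k * M k j) - (if i = j then bF M i else 0))
        = (-(2*α)) * ((M i j - zstar j) * (∑ k, L i k * Y k j))
          - (if i = j then 2 * ((M i j - zstar j) * bF M i) else 0) := by
      intro i j; rw [hLM i j]; by_cases h : i = j
      · subst h; simp only [if_true]; ring
      · simp only [h, if_false]; ring
    have hP : ∑ i, ∑ j, (M i j - zstar j) * (∑ k, L i k * Y k j) = QA := by
      have hcolLY : ∀ j, ∑ i, ∑ k, L i k * Y k j = 0 := by
        intro j
        rw [Finset.sum_comm]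
        exact Finset.sum_eq_zero fun k _ => by rw [← Finset.sum_mul, hbal k, zero_mul]
      have hcross : ∑ i, ∑ j, c j * (∑ k, L i k * Y k j) = 0 := by
        rw [Finset.sum_comm]
        refine Finset.sum_eq_zero fun j _ => ?_
        rw [← Finset.mul_sum, hcolLY j, mul_zero]
      calc ∑ i, ∑ j, (M i j - zstar j) * (∑ k, L i k * Y k j)
          = ∑ i, ∑ j, (Y i j * (∑ k, L i k * Y k j) + c j * (∑ k, L i k * Y k j)) :=
            Finset.sum_congr rfl fun i _ => Finset.sum_congr rfl fun j _ => by
              rw [hE i j]; ring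
        _ = (∑ i, ∑ j, Y i j * (∑ k, L i k * Y k j))
            + ∑ i, ∑ j, c j * (∑ k, L i k * Y k j) := by
            simp only [Finset.sum_add_distrib]
        _ = QA := by
            rw [hcross, add_zero, hQAdef, Finset.sum_comm]
            exact Finset.sum_congr rfl fun j _ => Finset.sum_congr rfl fun i _ => by
              rw [Finset.mul_sum]
    calc ∑ i, ∑ j, 2 * (M i j - zstar j) *
          (-α * (∑ k, L i k * M k j) - (if i = j then bF M i else 0))
        = ∑ i, ∑ j, ((-(2*α)) * ((M i j - zstar j) * (∑ k, L i k * Y k j))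
          - (if i = j then 2 * ((M i j - zstar j) * bF M i) else 0)) :=
          Finset.sum_congr rfl fun i _ => Finset.sum_congr rfl fun j _ => e1 i j
      _ = (∑ i, ∑ j, (-(2*α)) * ((M i j - zstar j) * (∑ k, L i k * Y k j)))
          - ∑ i, ∑ j, (if i = j then 2 * ((M i j - zstar j) * bF M i) else 0) := by
          simp only [Finset.sum_sub_distrib]
      _ = (-(2*α)) * QA - 2 * T := by
          congr 1
          · rw [← hP, Finset.mul_sum]
            exact Finset.sum_congr rfl fun i _ => by rw [Finset.mul_sum]
          · rw [hT, Finset.mul_sum]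
            exact Finset.sum_congr rfl fun i _ => by
              rw [Finset.sum_ite_eq _ i (fun j => 2 * ((M i j - zstar j) * bF M i))]
              simp
  -- step 2: QA ≥ lam2 * B2
  have hQA : lam2 * B2 ≤ QA := by
    have hcol : ∀ j, lam2 * (∑ i, Y i j ^ 2) ≤ ∑ i, ∑ k, Y i j * (L i k * Y k j) := by
      intro j
      have hx := hlam2spec (fun i => Y i j) (hYcol j)
      have hv : vnorm (fun i => Y i j) ^ 2 = ∑ i, Y i j ^ 2 :=
        Real.sq_sqrt (by positivity)
      rw [hv] at hx
      have hsw : ∑ i, ∑ k, Y i j * (L k i * Y k j) = ∑ i, ∑ k, Y i j * (L i k * Y k j) := by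
        rw [Finset.sum_comm]
        exact Finset.sum_congr rfl fun k _ => Finset.sum_congr rfl fun i _ => by ring
      have e3 : ∀ i k, Y i j * ((L i k + L k i) / 2) * Y k j =
          (Y i j * (L i k * Y k j)) / 2 + (Y i j * (L k i * Y k j)) / 2 := fun i k => by ring
      simp only [e3, Finset.sum_add_distrib, ← Finset.sum_div] at hx
      rw [hsw] at hx
      linarith
    have h1 : lam2 * B2 = ∑ j, lam2 * (∑ i, Y i j ^ 2) := by
      rw [hB2, Finset.sum_comm, Finset.mul_sum]
    rw [h1, hQAdef]
    exact Finset.sum_le_sum fun j _ => hcol j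
  -- step 3: decompose T
  set r : Fin N → ℝ := fun i => bF M i - F zb i with hrdef
  have hTdec : T = (∑ i, c i * (F zb i - F zstar i)) + (∑ i, c i * r i)
      + (∑ i, Y i i * (F zb i - F zstar i)) + (∑ i, Y i i * r i) := by
    rw [hT]
    simp only [← Finset.sum_add_distrib]
    refine Finset.sum_congr rfl fun i _ => ?_
    have h1 : F zstar i = 0 := by rw [hzstar]; rfl
    rw [hE i i, h1]
    simp only [hrdef]
    ring
  -- auxiliary norm facts
  have hdiag : Real.sqrt (∑ i, Y i i ^ 2) ≤ B := by
    rw [hB]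
    apply Real.sqrt_le_sqrt
    rw [hB2]
    exact Finset.sum_le_sum fun i _ => Finset.single_le_sum
      (f := fun j => Y i j ^ 2) (fun j _ => sq_nonneg _) (Finset.mem_univ i)
  have hvc : vnorm (zb - zstar) = A := by rw [hA]; rfl
  have hFz : Real.sqrt (∑ i, (F zb i - F zstar i) ^ 2) ≤ lbar * A := by
    have h := hFlip zb zstar
    rw [hvc] at h
    have hh : vnorm (F zb - F zstar) = Real.sqrt (∑ i, (F zb i - F zstar i) ^ 2) := rfl
    rw [hh] at h; exact h
  have hrB : Real.sqrt (∑ i, r i ^ 2) ≤ lF * B := by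
    have h := hbFlip M (Matrix.of fun _ j => zb j)
    have h1 : vnorm (bF M - bF (Matrix.of fun _ j => zb j)) = Real.sqrt (∑ i, r i ^ 2) := by
      unfold vnorm; congr 1
      refine Finset.sum_congr rfl fun i _ => ?_
      have hWi : bF (Matrix.of fun _ j => zb j) i = F zb i := by
        rw [hbF]; rfl
      simp [Pi.sub_apply, hWi, hrdef]
    have h2 : mnorm (M - Matrix.of fun _ j => zb j) = B := by
      rw [hB, hB2]; rfl
    rw [h1, h2] at h; exact h
  -- the four T bounds
  have hT1 : lunder * A ^ 2 ≤ ∑ i, c i * (F zb i - F zstar i) := by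
    have h := hmono zb zstar
    have hv2 : vnorm (zb - zstar) ^ 2 = A ^ 2 := by rw [hvc]
    rw [hv2] at h
    have heq : ∑ i, (F zb i - F zstar i) * (zb i - zstar i)
        = ∑ i, c i * (F zb i - F zstar i) :=
      Finset.sum_congr rfl fun i _ => by simp only [hcdef]; ring
    rw [heq] at h; exact h
  have hT2 : -(A * (lF * B)) ≤ ∑ i, c i * r i := by
    have hcs := cs_sqrt (fun i => -c i) r
    have hnc : Real.sqrt (∑ i, (-c i) ^ 2) = A := by
      rw [hA]; congr 1; exact Finset.sum_congr rfl fun i _ => by ring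
    rw [hnc] at hcs
    simp only [neg_mul, Finset.sum_neg_distrib] at hcs
    have h2 := mul_le_mul_of_nonneg_left hrB hA0
    linarith
  have hT3 : -(B * (lbar * A)) ≤ ∑ i, Y i i * (F zb i - F zstar i) := by
    have hcs := cs_sqrt (fun i => -(Y i i)) (fun i => F zb i - F zstar i)
    have hnc : Real.sqrt (∑ i, (-(Y i i)) ^ 2) = Real.sqrt (∑ i, Y i i ^ 2) := by
      congr 1; exact Finset.sum_congr rfl fun i _ => by ring
    rw [hnc] at hcs
    simp only [neg_mul, Finset.sum_neg_distrib] at hcs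
    have h2 : Real.sqrt (∑ i, Y i i ^ 2) * Real.sqrt (∑ i, (F zb i - F zstar i) ^ 2)
        ≤ B * (lbar * A) :=
      mul_le_mul hdiag hFz (Real.sqrt_nonneg _) hB0
    linarith
  have hT4 : -(B * (lF * B)) ≤ ∑ i, Y i i * r i := by
    have hcs := cs_sqrt (fun i => -(Y i i)) r
    have hnc : Real.sqrt (∑ i, (-(Y i i)) ^ 2) = Real.sqrt (∑ i, Y i i ^ 2) := by
      congr 1; exact Finset.sum_congr rfl fun i _ => by ring
    rw [hnc] at hcs
    simp only [neg_mul, Finset.sum_neg_distrib] at hcs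
    have h2 : Real.sqrt (∑ i, Y i i ^ 2) * Real.sqrt (∑ i, r i ^ 2) ≤ B * (lF * B) :=
      mul_le_mul hdiag hrB (Real.sqrt_nonneg _) hB0
    linarith
  -- V identity
  have hV : ∑ i, ∑ j, (M i j - zstar j) ^ 2 = (N : ℝ) * A ^ 2 + B ^ 2 := by
    rw [hA2, hBsq, hB2]
    have hcross : ∑ i, ∑ j, Y i j * (2 * c j) = 0 := by
      rw [Finset.sum_comm]
      refine Finset.sum_eq_zero fun j _ => ?_
      rw [← Finset.sum_mul, hYcol j, zero_mul]
    have hconst : ∑ (_i : Fin N), ∑ j, c j ^ 2 = (N : ℝ) * ∑ j, c j ^ 2 := by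
      rw [Finset.sum_const, Finset.card_univ, Fintype.card_fin, nsmul_eq_mul]
    calc ∑ i, ∑ j, (M i j - zstar j) ^ 2
        = ∑ i, ∑ j, (Y i j ^ 2 + Y i j * (2 * c j) + c j ^ 2) :=
          Finset.sum_congr rfl fun i _ => Finset.sum_congr rfl fun j _ => by
            rw [hE i j]; ring
      _ = (∑ i, ∑ j, Y i j ^ 2) + (∑ i, ∑ j, Y i j * (2 * c j))
          + ∑ (_i : Fin N), ∑ j, c j ^ 2 := by
          simp only [Finset.sum_add_distrib]
      _ = (N : ℝ) * (∑ j, c j ^ 2) + ∑ i, ∑ j, Y i j ^ 2 := by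
          rw [hcross, hconst]; ring
  -- final assembly
  rw [hsplit, hV, hTdec]
  have hABν := hν A B hA0 hB0
  have hQA' : (2 * α) * (lam2 * B2) ≤ (2 * α) * QA :=
    mul_le_mul_of_nonneg_left hQA (by linarith)
  have heqB : (2 * α) * (lam2 * B2) = 2 * (m + l) * B ^ 2 := by
    rw [← hBsq, hm]; ring
  have hp1 : A * (lF * B) ≤ l * (A * B) := by
    nlinarith [mul_nonneg (sub_nonneg.mpr hlF_le) (mul_nonneg hA0 hB0)]
  have hp2 : B * (lbar * A) ≤ l * (A * B) := by
    nlinarith [mul_nonneg (sub_nonneg.mpr hlbar_le) (mul_nonneg hA0 hB0)]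
  have hp3 : B * (lF * B) ≤ l * B ^ 2 := by
    nlinarith [mul_nonneg (sub_nonneg.mpr hlF_le) (mul_nonneg hB0 hB0)]
  have hb1 : -(2 * α) * QA ≤ -(2 * (m + l)) * B ^ 2 := by linarith
  linarith [hb1, hT1, hT2, hT3, hT4, hp1, hp2, hp3, hABν]

/-- Exponential convergence of the distributed Nash-equilibrium-seeking
dynamics `Ż = −α L Z − diag(𝐅(Z))` over a weight-balanced strongly connected digraph. -/
theorem nash_seeking_weight_balanced
    (N : ℕ) (hN : 1 ≤ N)
    -- the weighted digraph and its Laplacian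
    (a : Fin N → Fin N → ℝ) (L : Matrix (Fin N) (Fin N) ℝ)
    (ha_nonneg : ∀ i j, 0 ≤ a i j) (ha_diag : ∀ i, a i i = 0)
    (hLdef : ∀ i j, L i j = if i = j then ∑ k, a i k else -(a i j))
    -- strongly connected (irreducible adjacency matrix)
    (hconn : ∀ S : Finset (Fin N), S.Nonempty → S ≠ Finset.univ →
      ∃ i ∈ S, ∃ j, j ∉ S ∧ 0 < a i j)
    -- weight-balanced: 1ᵀ L = 0
    (hbal : ∀ j, ∑ i, L i j = 0)
    -- pseudogradient `F` and extended pseudogradient `𝐅` (row-wise evaluation)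
    (F : (Fin N → ℝ) → (Fin N → ℝ)) (bF : Matrix (Fin N) (Fin N) ℝ → (Fin N → ℝ))
    (hbF : ∀ Z i, bF Z i = F (Z i) i)
    (lunder lbar lF : ℝ) (hlunder : 0 < lunder) (hlbar : 0 < lbar) (hlF : 0 < lF)
    -- (i) F is l̲-strongly monotone and l̄-Lipschitz
    (hmono : ∀ x y : Fin N → ℝ,
      lunder * (vnorm (x - y)) ^ 2 ≤ ∑ i, (F x i - F y i) * (x i - y i))
    (hFlip : ∀ x y : Fin N → ℝ, vnorm (F x - F y) ≤ lbar * vnorm (x - y))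
    -- (ii) 𝐅 is l_F-Lipschitz (Frobenius norm on matrices)
    (hbFlip : ∀ Z W : Matrix (Fin N) (Fin N) ℝ,
      vnorm (bF Z - bF W) ≤ lF * mnorm (Z - W))
    -- (iii) λ₂ > 0 with xᵀ Sym(L) x ≥ λ₂‖x‖² whenever 1ᵀx = 0
    (lam2 : ℝ) (hlam2 : 0 < lam2)
    (hlam2spec : ∀ x : Fin N → ℝ, (∑ i, x i) = 0 →
      lam2 * (vnorm x) ^ 2 ≤ ∑ i, ∑ j, x i * ((L i j + L j i) / 2) * x j)
    -- (iv) z* with F(z*) = 0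
    (zstar : Fin N → ℝ) (hzstar : F zstar = 0)
    -- (v) the gain condition α > (1/λ₂)(l²/l̲ + l) with l = max(l̄, l_F)
    (α : ℝ)
    (hα : α > (1 / lam2) * ((max lbar lF) ^ 2 / lunder + max lbar lF)) :
    -- conclusion: uniform exponential convergence of every trajectory to 1 (z*)ᵀ
    ∃ κ > (0:ℝ), ∃ ν > (0:ℝ), ∀ Z : ℝ → Matrix (Fin N) (Fin N) ℝ,
      (∀ t ≥ (0:ℝ), ∀ i j, HasDerivAt (fun s => Z s i j)
          (-α * (∑ k, L i k * Z t k j) - (if i = j then bF (Z t) i else 0)) t) →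
      ∀ t ≥ (0:ℝ),
        mnorm (Z t - Matrix.of (fun _ j => zstar j)) ≤
          κ * Real.exp (-ν * t) * mnorm (Z 0 - Matrix.of (fun _ j => zstar j)) := by

  have hNpos : (0:ℝ) < N := by exact_mod_cast Nat.lt_of_lt_of_le Nat.zero_lt_one hN
  have hl0 : 0 < max lbar lF := lt_of_lt_of_le hlbar (le_max_left _ _)
  have hα0 : 0 ≤ α := by
    have h1 : 0 < (max lbar lF) ^ 2 / lunder :=
      div_pos (pow_pos hl0 2) hlunder
    have h2 : 0 < (1 / lam2) := by positivity
    have h3 : 0 < (1 / lam2) * ((max lbar lF) ^ 2 / lunder + max lbar lF) :=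
      mul_pos h2 (by linarith)
    linarith
  -- row sums of L vanish
  have hLrow : ∀ i, ∑ j, L i j = 0 := by
    intro i
    have h1 : ∀ j, L i j = (if i = j then (∑ k, a i k) else 0) + (-(a i j)) := by
      intro j; rw [hLdef]; by_cases h : i = j
      · subst h; simp [ha_diag]
      · simp [h]
    simp only [h1, Finset.sum_add_distrib, Finset.sum_ite_eq, Finset.mem_univ, if_true,
      Finset.sum_neg_distrib]
    ring
  -- construction of the decay rate ν
  obtain ⟨ν, hνpos, hνkey⟩ : ∃ ν > (0:ℝ), ∀ A B : ℝ, 0 ≤ A → 0 ≤ B →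
      ν * ((N : ℝ) * A ^ 2 + B ^ 2) ≤
        lunder * A ^ 2 + (α * lam2 - max lbar lF) * B ^ 2
          - 2 * (max lbar lF) * A * B := by
    set l : ℝ := max lbar lF with hldef
    have hαlam : α * lam2 > l ^ 2 / lunder + l := by
      have h := (mul_lt_mul_iff_right₀ hlam2).mpr hα
      have h2 : lam2 * ((1 / lam2) * (l ^ 2 / lunder + l)) = l ^ 2 / lunder + l := by
        field_simp
      rw [h2] at h
      linarith
    set m : ℝ := α * lam2 - l with hm
    have hlsq : 0 < l ^ 2 / lunder := by positivity
    have hml : l ^ 2 / lunder < m := by rw [hm]; linarith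
    have hmpos : 0 < m := lt_trans hlsq hml
    set c0 : ℝ := (m + l ^ 2 / lunder) / 2 with hc0
    have hc0pos : 0 < c0 := by rw [hc0]; linarith
    have hc1 : l ^ 2 / lunder < c0 := by rw [hc0]; linarith
    have hc2 : c0 < m := by rw [hc0]; linarith
    have hε1 : 0 < lunder - l ^ 2 / c0 := by
      have h3 : l ^ 2 / c0 < lunder := by
        rw [div_lt_iff₀ hc0pos]
        have h4 := (div_lt_iff₀ hlunder).mp hc1
        linarith
      linarith
    set ε : ℝ := min (lunder - l ^ 2 / c0) (m - c0) with hε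
    have hεpos : 0 < ε := lt_min hε1 (by linarith)
    refine ⟨ε / N, div_pos hεpos hNpos, ?_⟩
    intro A B hA hB
    have h2lw : 2 * l * A * B ≤ (l ^ 2 / c0) * A ^ 2 + c0 * B ^ 2 := by
      have h' : 2 * l * A * B ≤ (l ^ 2 * A ^ 2 + c0 ^ 2 * B ^ 2) / c0 := by
        rw [le_div_iff₀ hc0pos]
        nlinarith [sq_nonneg (l * A - c0 * B)]
      calc 2 * l * A * B ≤ (l ^ 2 * A ^ 2 + c0 ^ 2 * B ^ 2) / c0 := h'
        _ = (l ^ 2 / c0) * A ^ 2 + c0 * B ^ 2 := by field_simp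
    have hu : ε * A ^ 2 ≤ (lunder - l ^ 2 / c0) * A ^ 2 :=
      mul_le_mul_of_nonneg_right (min_le_left _ _) (sq_nonneg A)
    have hv : ε * B ^ 2 ≤ (m - c0) * B ^ 2 :=
      mul_le_mul_of_nonneg_right (min_le_right _ _) (sq_nonneg B)
    have hid : (ε / N) * ((N : ℝ) * A ^ 2 + B ^ 2) = ε * A ^ 2 + (ε / N) * B ^ 2 := by
      field_simp
    have hle : (ε / N) * B ^ 2 ≤ ε * B ^ 2 :=
      mul_le_mul_of_nonneg_right (div_le_self hεpos.le (by exact_mod_cast hN)) (sq_nonneg B)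
    clear_value m c0 ε
    rw [hid]
    linarith
  refine ⟨1, one_pos, ν, hνpos, ?_⟩
  intro Z hZ t ht
  -- the Lyapunov function and its derivative
  have hVderiv : ∀ s : ℝ, 0 ≤ s →
      HasDerivAt (fun u => ∑ i, ∑ j, (Z u i j - zstar j) ^ 2)
        (∑ i, ∑ j, 2 * (Z s i j - zstar j) *
          (-α * (∑ k, L i k * Z s k j) - (if i = j then bF (Z s) i else 0))) s := by
    intro s hs
    have h1 : ∀ i j, HasDerivAt (fun u => (Z u i j - zstar j) ^ 2)
        (2 * (Z s i j - zstar j) *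
          (-α * (∑ k, L i k * Z s k j) - (if i = j then bF (Z s) i else 0))) s := by
      intro i j
      have h0 := hZ s hs i j
      have h2 := (h0.sub_const (zstar j)).fun_pow 2
      refine h2.congr_deriv ?_
      push_cast
      ring
    exact HasDerivAt.fun_sum fun i _ => HasDerivAt.fun_sum fun j _ => h1 i j
  have hVnonneg : ∀ s : ℝ, 0 ≤ ∑ i, ∑ j, (Z s i j - zstar j) ^ 2 := by
    intro s; positivity
  have hVbound : ∀ s : ℝ, 0 ≤ s →
      (∑ i, ∑ j, 2 * (Z s i j - zstar j) *
        (-α * (∑ k, L i k * Z s k j) - (if i = j then bF (Z s) i else 0)))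
      ≤ -(2 * ν) * ∑ i, ∑ j, (Z s i j - zstar j) ^ 2 := by
    intro s _
    exact key_ineq N hN L hLrow hbal F bF hbF lunder lbar lF hmono hFlip hbFlip
      lam2 hlam2spec zstar hzstar α hα0 (le_max_left _ _) (le_max_right _ _) hl0.le
      (α * lam2 - max lbar lF) ν rfl hνkey (Z s)
  -- Grönwall-type argument
  have hexp : ∀ s : ℝ, HasDerivAt (fun u => Real.exp (2 * ν * u))
      (Real.exp (2 * ν * s) * (2 * ν * 1)) s := fun s =>
    ((hasDerivAt_id s).const_mul (2 * ν)).exp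
  have hganti : AntitoneOn
      (fun u => (∑ i, ∑ j, (Z u i j - zstar j) ^ 2) * Real.exp (2 * ν * u))
      (Set.Ici (0:ℝ)) := by
    apply antitoneOn_of_deriv_nonpos (convex_Ici 0)
    · intro s hs
      exact ((hVderiv s hs).mul (hexp s)).continuousAt.continuousWithinAt
    · intro s hs
      rw [interior_Ici] at hs
      exact (((hVderiv s (le_of_lt hs)).mul (hexp s)).differentiableAt).differentiableWithinAt
    · intro s hs
      rw [interior_Ici] at hs
      rw [(((hVderiv s hs.le)).fun_mul (hexp s)).deriv]
      have hb := hVbound s hs.le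
      have he := (Real.exp_pos (2 * ν * s)).le
      have h2 := mul_le_mul_of_nonneg_right hb he
      have h3 := hVnonneg s
      nlinarith
  have hmain : (∑ i, ∑ j, (Z t i j - zstar j) ^ 2) * Real.exp (2 * ν * t)
      ≤ ∑ i, ∑ j, (Z 0 i j - zstar j) ^ 2 := by
    have h := hganti Set.self_mem_Ici ht ht
    simpa using h
  have hV : (∑ i, ∑ j, (Z t i j - zstar j) ^ 2) ≤
      (∑ i, ∑ j, (Z 0 i j - zstar j) ^ 2) * Real.exp (-(2 * ν * t)) := by
    rw [Real.exp_neg, mul_comm (∑ i, ∑ j, (Z 0 i j - zstar j) ^ 2), ← div_eq_inv_mul,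
      le_div_iff₀ (Real.exp_pos _)]
    exact hmain
  -- conclusion
  have hnn : (0:ℝ) ≤ ∑ i, ∑ j, (Z 0 i j - zstar j) ^ 2 := hVnonneg 0
  calc mnorm (Z t - Matrix.of (fun _ j => zstar j))
      = Real.sqrt (∑ i, ∑ j, (Z t i j - zstar j) ^ 2) := by
        unfold mnorm
        congr 1
    _ ≤ Real.sqrt ((∑ i, ∑ j, (Z 0 i j - zstar j) ^ 2) * Real.exp (-(2 * ν * t))) :=
        Real.sqrt_le_sqrt hV
    _ = Real.sqrt (∑ i, ∑ j, (Z 0 i j - zstar j) ^ 2) * Real.exp (-(ν * t)) := by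
        rw [Real.sqrt_mul hnn]
        congr 1
        rw [show -(2 * ν * t) = -(ν * t) + -(ν * t) by ring, Real.exp_add, ← sq]
        exact Real.sqrt_sq (Real.exp_pos _).le
    _ = 1 * Real.exp (-ν * t) * mnorm (Z 0 - Matrix.of (fun _ j => zstar j)) := by
        have h0 : mnorm (Z 0 - Matrix.of (fun _ j => zstar j))
            = Real.sqrt (∑ i, ∑ j, (Z 0 i j - zstar j) ^ 2) := by
          unfold mnorm
          congr 1
        rw [h0, one_mul, neg_mul]
        exact mul_comm _ _
end

section
/- Let L ∈ ℝ^{N×N} be the Laplacian of a strongly connected weighted digraph with weights a_{ij}, and let ξ ∈ ℝ^N be the vector with ξᵀL = 0 and ξᵀ1 = 1. For i = 1, …, N let ξⁱ : [0, ∞) → ℝ^N be differentiable functions satisfying the consensus dynamics d/dt ξⁱ(t) = −Σ_{j=1}^N a_{ij} (ξⁱ(t) − ξʲ(t)) for all t ≥ 0, with initial conditions ξⁱ(0) = e_i (the i-th standard basis vector, i.e., ξⁱ_i(0) = 1 and ξⁱ_j(0) = 0 for j ≠ i). Then for every i: (a) the i-th component ξⁱ_i(t) > 0 for every t ≥ 0;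 and (b) there exist constants c > 0 and β > 0 such that |ξⁱ_i(t) − ξ_i| ≤ c e^{−β t} for all t ≥ 0, i.e., ξⁱ_i(t) converges exponentially to ξ_i as t → ∞. -/
open scoped BigOperators
open NormedSpace

namespace LeftEigAux

variable {N : ℕ}

/-- evaluation of a matrix entry, as a continuous linear map -/
noncomputable def entryCLM (i j : Fin N) : Matrix (Fin N) (Fin N) ℝ →L[ℝ] ℝ :=
  { toFun := fun A => A i j
    map_add' := fun _ _ => rfl
    map_smul' := fun _ _ => rfl
    cont := (continuous_apply j).comp (continuous_apply i) }

/-- a row sum, as a continuous linear map -/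
noncomputable def rowCLM (i : Fin N) : Matrix (Fin N) (Fin N) ℝ →L[ℝ] ℝ :=
  { toFun := fun A => ∑ j, A i j
    map_add' := fun _ _ => by simp [Finset.sum_add_distrib]
    map_smul' := fun _ _ => by simp [Finset.mul_sum]
    cont := continuous_finset_sum _ fun j _ => (continuous_apply j).comp (continuous_apply i) }

/-- a weighted column sum, as a continuous linear map -/
noncomputable def colCLM (w : Fin N → ℝ) (j : Fin N) : Matrix (Fin N) (Fin N) ℝ →L[ℝ] ℝ :=
  { toFun := fun A => ∑ k, w k * A k j
    map_add' := fun _ _ => by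
      simp [mul_add, Finset.sum_add_distrib]
    map_smul' := fun _ _ => by
      simp only [Matrix.smul_apply, smul_eq_mul, RingHom.id_apply, Finset.mul_sum]
      exact Finset.sum_congr rfl fun k _ => by ring
    cont := by
      show Continuous fun A : Matrix (Fin N) (Fin N) ℝ => ∑ k, w k * A k j
      exact continuous_finset_sum _ fun k _ =>
        continuous_const.mul ((continuous_apply j).comp (continuous_apply k)) }

theorem hasSum_exp (A : Matrix (Fin N) (Fin N) ℝ) :
    HasSum (fun n : ℕ => ((n.factorial : ℝ))⁻¹ • A ^ n) (exp A) := by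
  letI : NormedRing (Matrix (Fin N) (Fin N) ℝ) := Matrix.linftyOpNormedRing
  letI : NormedAlgebra ℝ (Matrix (Fin N) (Fin N) ℝ) := Matrix.linftyOpNormedAlgebra
  exact NormedSpace.exp_series_hasSum_exp' A

theorem hasSum_exp_entry (A : Matrix (Fin N) (Fin N) ℝ) (i j : Fin N) :
    HasSum (fun n : ℕ => ((n.factorial : ℝ))⁻¹ * (A ^ n) i j) (exp A i j) := by
  have := (hasSum_exp A).mapL (entryCLM i j)
  exact this

theorem hasSum_exp_row (A : Matrix (Fin N) (Fin N) ℝ) (i : Fin N) :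
    HasSum (fun n : ℕ => ((n.factorial : ℝ))⁻¹ * ∑ j, (A ^ n) i j)
      (∑ j, exp A i j) := by
  have := (hasSum_exp A).mapL (rowCLM i)
  simpa [rowCLM, smul_eq_mul, Finset.mul_sum] using this

theorem hasSum_exp_col (A : Matrix (Fin N) (Fin N) ℝ) (w : Fin N → ℝ) (j : Fin N) :
    HasSum (fun n : ℕ => ((n.factorial : ℝ))⁻¹ * ∑ k, w k * (A ^ n) k j)
      (∑ k, w k * exp A k j) := by
  have := (hasSum_exp A).mapL (colCLM w j)
  simp only [colCLM, ContinuousLinearMap.coe_mk', LinearMap.coe_mk, AddHom.coe_mk,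
    Matrix.smul_apply, smul_eq_mul] at this
  convert this using 2 with n
  rw [Finset.mul_sum]
  exact Finset.sum_congr rfl fun k _ => by ring

theorem deriv_exp_entry (A : Matrix (Fin N) (Fin N) ℝ) (t : ℝ) (i j : Fin N) :
    HasDerivAt (fun u : ℝ => exp (u • A) i j) ((exp (t • A) * A) i j) t := by
  letI : NormedRing (Matrix (Fin N) (Fin N) ℝ) := Matrix.linftyOpNormedRing
  letI : NormedAlgebra ℝ (Matrix (Fin N) (Fin N) ℝ) := Matrix.linftyOpNormedAlgebra
  exact (entryCLM i j).hasFDerivAt.comp_hasDerivAt t (hasDerivAt_exp_smul_const A t)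

theorem pow_entry_nonneg {A : Matrix (Fin N) (Fin N) ℝ} (hA : ∀ i j, 0 ≤ A i j) :
    ∀ (n : ℕ) (i j : Fin N), 0 ≤ (A ^ n) i j := by
  intro n
  induction n with
  | zero => intro i j; simp [Matrix.one_apply]; positivity
  | succ n ih =>
    intro i j
    rw [pow_succ, Matrix.mul_apply]
    exact Finset.sum_nonneg fun k _ => mul_nonneg (ih i k) (hA k j)

theorem exp_entry_nonneg {A : Matrix (Fin N) (Fin N) ℝ} (hA : ∀ i j, 0 ≤ A i j) (i j : Fin N) :
    0 ≤ exp A i j :=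
  (hasSum_exp_entry A i j).nonneg fun n =>
    mul_nonneg (by positivity) (pow_entry_nonneg hA n i j)

theorem exp_entry_ge_term {A : Matrix (Fin N) (Fin N) ℝ} (hA : ∀ i j, 0 ≤ A i j)
    (n : ℕ) (i j : Fin N) :
    ((n.factorial : ℝ))⁻¹ * (A ^ n) i j ≤ exp A i j :=
  le_hasSum (hasSum_exp_entry A i j) n fun m _ =>
    mul_nonneg (by positivity) (pow_entry_nonneg hA m i j)

theorem one_le_exp_diag {A : Matrix (Fin N) (Fin N) ℝ} (hA : ∀ i j, 0 ≤ A i j) (i : Fin N) :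
    1 ≤ exp A i i := by
  have := exp_entry_ge_term hA 0 i i
  simpa [Matrix.one_apply] using this

theorem exp_entry_pos {A : Matrix (Fin N) (Fin N) ℝ} (hA : ∀ i j, 0 ≤ A i j)
    {i j : Fin N} (h : ∃ n, 0 < (A ^ n) i j) : 0 < exp A i j := by
  obtain ⟨n, hn⟩ := h
  calc (0:ℝ) < ((n.factorial : ℝ))⁻¹ * (A ^ n) i j := by positivity
    _ ≤ _ := exp_entry_ge_term hA n i j

open Classical in
theorem irreducible_pow_pos {A : Matrix (Fin N) (Fin N) ℝ}
    (hA : ∀ i j, 0 ≤ A i j)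
    (a : Fin N → Fin N → ℝ)
    (hAa : ∀ i j, i ≠ j → 0 < a i j → 0 < A i j)
    (hconn : ∀ S : Finset (Fin N), S.Nonempty → S ≠ Finset.univ →
      ∃ i ∈ S, ∃ j, j ∉ S ∧ 0 < a i j)
    (i j : Fin N) : ∃ n, 0 < (A ^ n) i j := by
  set F : ℕ → Matrix (Fin N) (Fin N) ℝ := fun m => ∑ n ∈ Finset.range (m + 1), A ^ n with hF
  have hFnn : ∀ m p q, 0 ≤ F m p q := by
    intro m p q
    simp only [hF, Matrix.sum_apply]
    exact Finset.sum_nonneg fun n _ => pow_entry_nonneg hA n p q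
  set S : ℕ → Finset (Fin N) := fun m => Finset.univ.filter (fun q => 0 < F m i q) with hS
  have hmemS : ∀ m q, q ∈ S m ↔ 0 < F m i q := by
    intro m q; simp [hS]
  have hiS : ∀ m, i ∈ S m := by
    intro m
    rw [hmemS]
    have h0 : (0:ℝ) < (A ^ 0) i i := by simp [Matrix.one_apply]
    have : (A ^ 0) i i ≤ F m i i := by
      simp only [hF, Matrix.sum_apply]
      refine Finset.single_le_sum (fun n _ => pow_entry_nonneg hA n i i) ?_
      simp
    linarith
  have hmono : ∀ m, S m ⊆ S (m + 1) := by
    intro m q hq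
    rw [hmemS] at hq ⊢
    have : F m i q ≤ F (m+1) i q := by
      simp only [hF, Matrix.sum_apply]
      refine Finset.sum_le_sum_of_subset_of_nonneg ?_ ?_
      · exact Finset.range_subset_range.2 (by omega)
      · intro n _ _; exact pow_entry_nonneg hA n i q
    linarith
  have hgrow : ∀ m, S m ≠ Finset.univ → ∃ q, q ∉ S m ∧ q ∈ S (m + 1) := by
    intro m hne
    obtain ⟨p, hp, q, hq, haq⟩ := hconn (S m) ⟨i, hiS m⟩ hne
    refine ⟨q, hq, ?_⟩
    have hpq : p ≠ q := fun h => hq (h ▸ hp)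
    have hApq : 0 < A p q := hAa p q hpq haq
    rw [hmemS] at hp ⊢
    have key : F m i p * A p q ≤ F (m+1) i q := by
      have h1 : (F m * A) i q ≤ F (m+1) i q := by
        have hexp : F (m+1) = 1 + F m * A := by
          simp only [hF, Finset.sum_mul, ← pow_succ]
          rw [Finset.sum_range_succ' (fun n => A ^ n) (m+1)]
          simp [add_comm]
        rw [hexp]
        have h1q : 0 ≤ (1 : Matrix (Fin N) (Fin N) ℝ) i q := by
          simp [Matrix.one_apply]; positivity
        simp only [Matrix.add_apply]
        linarith
      refine le_trans ?_ h1
      rw [Matrix.mul_apply]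
      refine Finset.single_le_sum (fun k _ => mul_nonneg (hFnn m i k) (hA k q)) ?_
      simp
    nlinarith [hFnn (m+1) i q]
  have hcard : ∀ m, S m = Finset.univ ∨ m + 1 ≤ (S m).card := by
    intro m
    induction m with
    | zero => right; exact Finset.card_pos.2 ⟨i, hiS 0⟩
    | succ m ih =>
      rcases ih with h | h
      · left
        exact Finset.univ_subset_iff.1 (h ▸ hmono m)
      · by_cases hu : S m = Finset.univ
        · left; exact Finset.univ_subset_iff.1 (hu ▸ hmono m)
        · right
          obtain ⟨q, hq, hq'⟩ := hgrow m hu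
          have : insert q (S m) ⊆ S (m+1) :=
            Finset.insert_subset hq' (hmono m)
          calc m + 2 ≤ (insert q (S m)).card := by
                rw [Finset.card_insert_of_notMem hq]; omega
            _ ≤ (S (m+1)).card := Finset.card_le_card this
  have huniv : S (N - 1) = Finset.univ := by
    rcases hcard (N - 1) with h | h
    · exact h
    · apply Finset.eq_univ_of_card
      have hle := Finset.card_le_univ (S (N-1))
      simp only [Finset.card_univ, Fintype.card_fin] at hle ⊢
      have hNpos : 1 ≤ N := Nat.pos_of_ne_zero (fun h => (h ▸ i).elim0)
      omega
  have hj : j ∈ S (N - 1) := huniv ▸ Finset.mem_univ j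
  rw [hmemS] at hj
  by_contra hcon
  push_neg at hcon
  have : F (N-1) i j ≤ 0 := by
    simp only [hF, Matrix.sum_apply]
    exact Finset.sum_nonpos fun n _ => hcon n
  linarith

noncomputable def osc [NeZero N] (v : Fin N → ℝ) : ℝ :=
  Finset.univ.sup' Finset.univ_nonempty v - Finset.univ.inf' Finset.univ_nonempty v

theorem sub_le_osc [NeZero N] (v : Fin N → ℝ) (i j : Fin N) : v i - v j ≤ osc v :=
  sub_le_sub (Finset.le_sup' v (Finset.mem_univ i)) (Finset.inf'_le v (Finset.mem_univ j))

theorem osc_nonneg [NeZero N] (v : Fin N → ℝ) : 0 ≤ osc v := by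
  have := sub_le_osc v ⟨0, Nat.pos_of_ne_zero (NeZero.ne N)⟩ ⟨0, Nat.pos_of_ne_zero (NeZero.ne N)⟩
  simpa using this

theorem abs_sub_le_osc [NeZero N] (v : Fin N → ℝ) (i j : Fin N) : |v i - v j| ≤ osc v :=
  abs_sub_le_iff.2 ⟨sub_le_osc v i j, sub_le_osc v j i⟩

theorem osc_contract [NeZero N] (Q : Matrix (Fin N) (Fin N) ℝ) (δ : ℝ)
    (hQ : ∀ i j, δ ≤ Q i j) (hrow : ∀ i, ∑ j, Q i j = 1) (v : Fin N → ℝ) :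
    osc (fun i => ∑ k, Q i k * v k) ≤ (1 - N * δ) * osc v := by
  classical
  set m := Finset.univ.inf' Finset.univ_nonempty v with hm
  set M := Finset.univ.sup' Finset.univ_nonempty v with hM
  have hvm : ∀ k, m ≤ v k := fun k => Finset.inf'_le v (Finset.mem_univ k)
  have hvM : ∀ k, v k ≤ M := fun k => Finset.le_sup' v (Finset.mem_univ k)
  have hMm : osc v = M - m := rfl
  have key : ∀ i i', (∑ k, Q i k * v k) - (∑ k, Q i' k * v k) ≤ (1 - N * δ) * (M - m) := by
    intro i i'
    have e1 : (∑ k, Q i k * v k) - (∑ k, Q i' k * v k)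
        = ∑ k, (Q i k - Q i' k) * (v k - m) := by
      rw [Finset.sum_congr rfl (fun k _ => by ring : ∀ k ∈ Finset.univ,
        (Q i k - Q i' k) * (v k - m) = Q i k * v k - Q i' k * v k - (Q i k - Q i' k) * m)]
      rw [Finset.sum_sub_distrib, Finset.sum_sub_distrib, ← Finset.sum_mul,
        Finset.sum_sub_distrib, hrow, hrow]
      ring
    rw [e1]
    have e2 : ∀ k, (Q i k - Q i' k) * (v k - m) ≤ (Q i k - min (Q i k) (Q i' k)) * (M - m) := by
      intro k
      rcases le_total (Q i' k) (Q i k) with h | h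
      · rw [min_eq_right h]
        apply mul_le_mul (le_refl _) (by linarith [hvM k]) (by linarith [hvm k]) (by linarith)
      · rw [min_eq_left h]
        have h1 : (Q i k - Q i' k) * (v k - m) ≤ 0 :=
          mul_nonpos_of_nonpos_of_nonneg (by linarith) (by linarith [hvm k])
        simpa using h1
    calc ∑ k, (Q i k - Q i' k) * (v k - m)
        ≤ ∑ k, (Q i k - min (Q i k) (Q i' k)) * (M - m) :=
          Finset.sum_le_sum fun k _ => e2 k
      _ = (1 - ∑ k, min (Q i k) (Q i' k)) * (M - m) := by
          rw [← Finset.sum_mul, Finset.sum_sub_distrib, hrow]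
      _ ≤ (1 - N * δ) * (M - m) := by
          have h1 : (N : ℝ) * δ ≤ ∑ k, min (Q i k) (Q i' k) := by
            calc (N:ℝ) * δ = ∑ _k : Fin N, δ := by
                  simp [Finset.sum_const, nsmul_eq_mul]
              _ ≤ _ := Finset.sum_le_sum fun k _ => le_min (hQ i k) (hQ i' k)
          have h2 : (0:ℝ) ≤ M - m := by
            have := osc_nonneg v; rw [hMm] at this; linarith
          apply mul_le_mul_of_nonneg_right (by linarith) h2
  obtain ⟨i0, -, h0⟩ := Finset.exists_mem_eq_sup' (Finset.univ_nonempty (α := Fin N))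
    (fun i => ∑ k, Q i k * v k)
  obtain ⟨i1, -, h1⟩ := Finset.exists_mem_eq_inf' (Finset.univ_nonempty (α := Fin N))
    (fun i => ∑ k, Q i k * v k)
  show _ - _ ≤ _
  rw [h0, h1, hMm]
  exact key i0 i1

end LeftEigAux

open LeftEigAux in
/-- For the consensus dynamics `ξ̇ⁱ = −Σⱼ a_{ij}(ξⁱ − ξʲ)` over a strongly
connected digraph with initial conditions `ξⁱ(0) = e_i`, each diagonal estimate `ξⁱ_i(t)`
stays positive and converges exponentially to the `i`-th entry of the normalized left
eigenvector `ξ` of the Laplacian. -/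
theorem left_eigenvector_estimator
    (N : ℕ) (hN : 1 ≤ N)
    -- the weighted digraph and its Laplacian
    (a : Fin N → Fin N → ℝ) (L : Matrix (Fin N) (Fin N) ℝ)
    (ha_nonneg : ∀ i j, 0 ≤ a i j) (ha_diag : ∀ i, a i i = 0)
    (hLdef : ∀ i j, L i j = if i = j then ∑ k, a i k else -(a i j))
    -- strongly connected (irreducible adjacency matrix)
    (hconn : ∀ S : Finset (Fin N), S.Nonempty → S ≠ Finset.univ →
      ∃ i ∈ S, ∃ j, j ∉ S ∧ 0 < a i j)
    -- the normalized left eigenvector: ξᵀL = 0, ξᵀ1 = 1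
    (xi : Fin N → ℝ)
    (hxiL : ∀ j, ∑ k, xi k * L k j = 0) (hxi1 : ∑ k, xi k = 1)
    -- the estimator trajectories ξⁱ : [0,∞) → ℝ^N
    (Xi : Fin N → ℝ → (Fin N → ℝ))
    (hinit : ∀ i, Xi i 0 = fun k => if k = i then (1:ℝ) else 0)
    (hdyn : ∀ i, ∀ t ≥ (0:ℝ), ∀ k, HasDerivAt (fun s => Xi i s k)
      (-(∑ j, a i j * (Xi i t k - Xi j t k))) t) :
    ∀ i,
      -- (a) positivity of the diagonal estimate
      (∀ t ≥ (0:ℝ), 0 < Xi i t i) ∧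
      -- (b) exponential convergence to ξ_i
      (∃ c > (0:ℝ), ∃ β > (0:ℝ), ∀ t ≥ (0:ℝ),
        |Xi i t i - xi i| ≤ c * Real.exp (-β * t)) := by
  haveI : NeZero N := ⟨by omega⟩
  classical
  have hLapply : ∀ p q, L p q = (if p = q then ∑ k, a p k else 0) - a p q := by
    intro p q
    rw [hLdef]
    by_cases h : p = q
    · subst h; simp [ha_diag p]
    · simp [h]
  have hLrow : ∀ p, ∑ q, L p q = 0 := by
    intro p
    simp only [hLapply, Finset.sum_sub_distrib, Finset.sum_ite_eq, Finset.mem_univ, if_true]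
    simp
  have hLpowrow : ∀ (n : ℕ) (p : Fin N), ∑ q, (L ^ (n+1)) p q = 0 := by
    intro n p
    calc ∑ q, (L ^ (n+1)) p q = ∑ q, ∑ k, (L ^ n) p k * L k q :=
          Finset.sum_congr rfl fun q _ => by rw [pow_succ, Matrix.mul_apply]
      _ = ∑ k, (L ^ n) p k * ∑ q, L k q := by
          rw [Finset.sum_comm]
          exact Finset.sum_congr rfl fun k _ => (Finset.mul_sum _ _ _).symm
      _ = 0 := by simp [hLrow]
  have hxiLpow : ∀ (n : ℕ) (q : Fin N), ∑ k, xi k * (L ^ (n+1)) k q = 0 := by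
    intro n q
    calc ∑ k, xi k * (L ^ (n+1)) k q
        = ∑ k, ∑ m, xi k * L k m * (L ^ n) m q := by
          rw [pow_succ']
          refine Finset.sum_congr rfl fun k _ => ?_
          rw [Matrix.mul_apply, Finset.mul_sum]
          exact Finset.sum_congr rfl fun m _ => by ring
      _ = ∑ m, (∑ k, xi k * L k m) * (L ^ n) m q := by
          rw [Finset.sum_comm]
          exact Finset.sum_congr rfl fun m _ => by rw [Finset.sum_mul]
      _ = 0 := by simp [hxiL]
  set P : ℝ → Matrix (Fin N) (Fin N) ℝ := fun t => exp ((-t) • L) with hP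
  have hpow_entry : ∀ (t : ℝ) (n : ℕ) (p q : Fin N),
      (((-t) • L) ^ n) p q = (-t) ^ n * (L ^ n) p q := by
    intro t n p q
    rw [smul_pow]
    simp
  have hProw : ∀ (t : ℝ) (p : Fin N), ∑ q, P t p q = 1 := by
    intro t p
    have h := hasSum_exp_row ((-t) • L) p
    have h2 : HasSum (fun n : ℕ => if n = 0 then (1:ℝ) else 0) (∑ q, P t p q) := by
      convert h using 2 with n
      rcases n with _ | n
      · simp [Matrix.one_apply]
      · rw [Finset.sum_congr rfl fun q _ => hpow_entry t (n+1) p q, ← Finset.mul_sum,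
          hLpowrow n p, mul_zero, mul_zero]
        simp
    exact h2.unique (hasSum_ite_eq (0:ℕ) (1:ℝ))
  have hPxi : ∀ (t : ℝ) (q : Fin N), ∑ k, xi k * P t k q = xi q := by
    intro t q
    have h := hasSum_exp_col ((-t) • L) xi q
    have h2 : HasSum (fun n : ℕ => if n = 0 then xi q else 0) (∑ k, xi k * P t k q) := by
      convert h using 2 with n
      rcases n with _ | n
      · simp [Matrix.one_apply, mul_ite, mul_one, mul_zero]
      · rw [Finset.sum_congr rfl fun k _ => (by rw [hpow_entry t (n+1) k q]; ring :
          xi k * (((-t) • L) ^ (n+1)) k q = (-t)^(n+1) * (xi k * (L^(n+1)) k q)),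
          ← Finset.mul_sum, hxiLpow n q, mul_zero, mul_zero]
        simp
    exact h2.unique (hasSum_ite_eq (0:ℕ) (xi q))
  -- the matrix B = cI - L with nonnegative entries
  set c : ℝ := Finset.univ.sup' Finset.univ_nonempty (fun p => ∑ k, a p k) with hc
  have hca : ∀ p, ∑ k, a p k ≤ c := by
    intro p; rw [hc]; exact Finset.le_sup' (fun p => ∑ k, a p k) (Finset.mem_univ p)
  have hc0 : 0 ≤ c := le_trans
    (Finset.sum_nonneg fun k _ => ha_nonneg ⟨0, by omega⟩ k) (hca ⟨0, by omega⟩)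
  set B : Matrix (Fin N) (Fin N) ℝ :=
    Matrix.of (fun p q => if p = q then c - ∑ k, a p k else a p q) with hB
  have hBapp : ∀ p q, B p q = if p = q then c - ∑ k, a p k else a p q := fun p q => rfl
  have hBnn : ∀ p q, 0 ≤ B p q := by
    intro p q; rw [hBapp]; split
    · linarith [hca p]
    · exact ha_nonneg p q
  have hsmulB : ∀ t : ℝ, 0 ≤ t → ∀ p q, 0 ≤ (t • B) p q := fun t ht p q => by
    simpa using mul_nonneg ht (hBnn p q)
  have hLB : ∀ t : ℝ, (-t) • L = t • B + (-(t*c)) • (1 : Matrix (Fin N) (Fin N) ℝ) := by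
    intro t; ext p q
    simp only [Matrix.add_apply, Matrix.smul_apply, Matrix.one_apply, smul_eq_mul,
      hLdef, hBapp]
    by_cases h : p = q <;> simp [h] <;> ring
  have hPsplit : ∀ t : ℝ, P t = Real.exp (-(t*c)) • exp (t • B) := by
    intro t
    have hcomm : Commute (t • B) ((-(t*c)) • (1 : Matrix (Fin N) (Fin N) ℝ)) :=
      (Commute.one_right (t • B)).smul_right _
    show exp ((-t) • L) = _
    rw [hLB t, Matrix.exp_add_of_commute _ _ hcomm]
    have h1 : (-(t*c)) • (1 : Matrix (Fin N) (Fin N) ℝ)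
        = Matrix.diagonal (fun _ => -(t*c)) := by
      ext p q
      by_cases h : p = q <;> simp [Matrix.one_apply, Matrix.diagonal_apply, h]
    rw [h1, Matrix.exp_diagonal]
    have h2 : exp (fun _ : Fin N => -(t*c)) = fun _ : Fin N => Real.exp (-(t*c)) := by
      rw [Pi.exp_def]
      funext p
      rw [Real.exp_eq_exp_ℝ]
    rw [h2]
    have h3 : Matrix.diagonal (fun _ : Fin N => Real.exp (-(t*c)))
        = Real.exp (-(t*c)) • (1 : Matrix (Fin N) (Fin N) ℝ) := by
      ext p q
      by_cases h : p = q <;> simp [Matrix.one_apply, Matrix.diagonal_apply, h]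
    rw [h3, mul_smul_comm, mul_one]
  have hPnn : ∀ t : ℝ, 0 ≤ t → ∀ p q, 0 ≤ P t p q := by
    intro t ht p q
    rw [hPsplit t]
    simp only [Matrix.smul_apply, smul_eq_mul]
    exact mul_nonneg (Real.exp_nonneg _) (exp_entry_nonneg (hsmulB t ht) p q)
  have hPdiag : ∀ t : ℝ, 0 ≤ t → ∀ p, 0 < P t p p := by
    intro t ht p
    rw [hPsplit t]
    simp only [Matrix.smul_apply, smul_eq_mul]
    nlinarith [Real.exp_pos (-(t*c)), one_le_exp_diag (hsmulB t ht) p]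
  have hPadd : ∀ s t : ℝ, P (s + t) = P s * P t := by
    intro s t
    have hcomm : Commute ((-s) • L) ((-t) • L) := ((Commute.refl L).smul_left _).smul_right _
    have heq : (-(s+t)) • L = (-s) • L + (-t) • L := by rw [← add_smul]; ring_nf
    show exp _ = _
    rw [heq, Matrix.exp_add_of_commute _ _ hcomm]
  have hP0 : P 0 = 1 := by
    show exp _ = 1
    rw [neg_zero, zero_smul, exp_zero]
  -- the trajectories coincide with the propagator
  have hrep : ∀ t : ℝ, 0 ≤ t → ∀ p q, Xi p t q = P t p q := by
    intro t ht
    have hkey : ∀ i j : Fin N,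
        ∑ k, exp (t • L) i k * Xi k t j = (1 : Matrix (Fin N) (Fin N) ℝ) i j := by
      intro i j
      set g : ℝ → ℝ := fun s => ∑ k, exp (s • L) i k * Xi k s j with hg
      have hg' : ∀ u : ℝ, 0 ≤ u → HasDerivAt g 0 u := by
        intro u hu
        have hterm : ∀ k : Fin N, HasDerivAt (fun s => exp (s • L) i k * Xi k s j)
            ((exp (u • L) * L) i k * Xi k u j
              + exp (u • L) i k * (-(∑ m, a k m * (Xi k u j - Xi m u j)))) u :=
          fun k => (deriv_exp_entry L u i k).mul (hdyn k u hu j)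
        have hsum := HasDerivAt.fun_sum (fun k (_ : k ∈ Finset.univ) => hterm k)
        have hzero : ∑ k, ((exp (u • L) * L) i k * Xi k u j
            + exp (u • L) i k * (-(∑ m, a k m * (Xi k u j - Xi m u j)))) = 0 := by
          have hD : ∀ k, (∑ m, a k m * (Xi k u j - Xi m u j)) = ∑ m, L k m * Xi m u j := by
            intro k
            have e : ∀ m, L k m * Xi m u j
                = (if k = m then (∑ l, a k l) else 0) * Xi m u j - a k m * Xi m u j := by
              intro m; rw [hLapply k m]; ring
            rw [Finset.sum_congr rfl fun m _ => e m, Finset.sum_sub_distrib]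
            simp only [ite_mul, zero_mul, Finset.sum_ite_eq, Finset.mem_univ, if_true]
            rw [Finset.sum_congr rfl fun m _ =>
              (mul_sub (a k m) (Xi k u j) (Xi m u j) :
                a k m * (Xi k u j - Xi m u j) = _), Finset.sum_sub_distrib, ← Finset.sum_mul]
          rw [Finset.sum_congr rfl fun k _ => by rw [hD k]]
          have h1 : ∑ k, (exp (u • L) * L) i k * Xi k u j
              = ∑ m, ∑ k, exp (u • L) i m * (L m k * Xi k u j) := by
            rw [Finset.sum_comm]
            refine Finset.sum_congr rfl fun k _ => ?_
            rw [Matrix.mul_apply, Finset.sum_mul]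
            exact Finset.sum_congr rfl fun m _ => by ring
          have h2 : ∀ k : Fin N, exp (u • L) i k * (∑ m, L k m * Xi m u j)
              = ∑ m, exp (u • L) i k * (L k m * Xi m u j) :=
            fun k => Finset.mul_sum _ _ _
          simp only [mul_neg, Finset.sum_add_distrib, Finset.sum_neg_distrib]
          rw [h1, Finset.sum_congr rfl fun k _ => h2 k]
          rw [add_neg_eq_zero]
        rw [← hzero]
        exact hsum
      have hconst : g t = g 0 := by
        rcases eq_or_lt_of_le ht with h | h
        · rw [← h]
        · have hc := constant_of_has_deriv_right_zero (f := g) (a := 0) (b := t)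
            (fun s hs => ((hg' s hs.1).continuousAt).continuousWithinAt)
            (fun s hs => (hg' s hs.1).hasDerivWithinAt)
          exact hc t ⟨ht, le_refl t⟩
      have hg0 : g 0 = (1 : Matrix (Fin N) (Fin N) ℝ) i j := by
        rw [hg]
        simp only [zero_smul, exp_zero, hinit]
        simp [Matrix.one_apply, mul_ite, eq_comm]
      calc ∑ k, exp (t • L) i k * Xi k t j = g t := rfl
        _ = (1 : Matrix (Fin N) (Fin N) ℝ) i j := by rw [hconst, hg0]
    have hMeq : exp (t • L) * (Matrix.of fun p q => Xi p t q) = 1 := by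
      ext p q
      rw [Matrix.mul_apply]
      exact hkey p q
    have hinv : P t * exp (t • L) = 1 := by
      have hcomm : Commute ((-t) • L) (t • L) := ((Commute.refl L).smul_left _).smul_right _
      show exp ((-t) • L) * exp (t • L) = 1
      rw [← Matrix.exp_add_of_commute _ _ hcomm, ← add_smul, neg_add_cancel, zero_smul,
        exp_zero]
    have hfin : Matrix.of (fun p q => Xi p t q) = P t := by
      calc Matrix.of (fun p q => Xi p t q)
          = (P t * exp (t • L)) * Matrix.of (fun p q => Xi p t q) := by rw [hinv, one_mul]
        _ = P t * (exp (t • L) * Matrix.of (fun p q => Xi p t q)) := by rw [mul_assoc]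
        _ = P t := by rw [hMeq, mul_one]
    intro p q
    exact congrFun (congrFun (congrArg (fun M => (M : Matrix (Fin N) (Fin N) ℝ)) hfin) p) q
  -- positivity of entries of P 1
  have hBirr : ∀ p q, ∃ n, 0 < (B ^ n) p q := by
    intro p q
    refine irreducible_pow_pos hBnn a (fun p' q' hpq hpos => ?_) hconn p q
    rw [hBapp]
    simp only [hpq, if_false]
    exact hpos
  have hP1pos : ∀ p q, 0 < P 1 p q := by
    intro p q
    rw [hPsplit 1, one_smul]
    simp only [Matrix.smul_apply, smul_eq_mul]
    exact mul_pos (Real.exp_pos _) (exp_entry_pos hBnn (hBirr p q))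
  -- the contraction constant
  set δ : ℝ := Finset.univ.inf' Finset.univ_nonempty
    (fun p : Fin N × Fin N => P 1 p.1 p.2) with hδ
  have hδpos : 0 < δ := (Finset.lt_inf'_iff _).2 fun p _ => hP1pos p.1 p.2
  have hδle : ∀ p q, δ ≤ P 1 p q := fun p q => Finset.inf'_le _ (Finset.mem_univ (p, q))
  have hNδ : (N:ℝ) * δ ≤ 1 := by
    have i0 : Fin N := ⟨0, by omega⟩
    calc (N:ℝ) * δ = ∑ _q : Fin N, δ := by simp [Finset.sum_const, nsmul_eq_mul]
      _ ≤ ∑ q, P 1 i0 q := Finset.sum_le_sum fun q _ => hδle i0 q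
      _ = 1 := hProw 1 i0
  set r : ℝ := 1 - N * (δ/2) with hr
  have heq2 : (N:ℝ) * (δ/2) = ((N:ℝ) * δ)/2 := by ring
  have hr_half : 1/2 ≤ r := by rw [hr, heq2]; linarith
  have hNpos : (1:ℝ) ≤ (N:ℝ) := by exact_mod_cast hN
  have hr_lt : r < 1 := by rw [hr, heq2]; nlinarith
  have hr_pos : (0:ℝ) < r := lt_of_lt_of_le (by norm_num) hr_half
  set β : ℝ := -Real.log r with hβ
  have hβpos : 0 < β := by
    rw [hβ]
    have := Real.log_neg hr_pos hr_lt
    linarith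
  -- the main loop, for each node i
  intro i
  have hpos : ∀ t ≥ (0:ℝ), 0 < Xi i t i := fun t ht => by
    rw [hrep t ht]; exact hPdiag t ht i
  refine ⟨hpos, ?_⟩
  set col : ℝ → Fin N → ℝ := fun t p => P t p i with hcol
  have hstep : ∀ t : ℝ, 0 ≤ t → osc (col (1 + t)) ≤ r * osc (col t) := by
    intro t ht
    have h := osc_contract (P 1) (δ/2) (fun p q => by linarith [hδle p q]) (hProw 1) (col t)
    have hcoleq : col (1 + t) = fun p => ∑ m, P 1 p m * col t m := by
      funext p
      show P (1 + t) p i = _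
      rw [hPadd 1 t, Matrix.mul_apply]
    rw [hcoleq, hr]
    exact h
  have hmono : ∀ s : ℝ, 0 ≤ s → ∀ t : ℝ, osc (col (s + t)) ≤ osc (col t) := by
    intro s hs t
    have h := osc_contract (P s) 0 (fun p q => hPnn s hs p q) (hProw s) (col t)
    have hcoleq : col (s + t) = fun p => ∑ m, P s p m * col t m := by
      funext p
      show P (s + t) p i = _
      rw [hPadd s t, Matrix.mul_apply]
    rw [hcoleq]
    simpa using h
  have hosc0 : osc (col 0) ≤ 1 := by
    have h1 : ∀ p, col 0 p ≤ 1 := by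
      intro p
      show P 0 p i ≤ 1
      rw [hP0]
      by_cases h : p = i <;> simp [Matrix.one_apply, h]
    have h0 : ∀ p, 0 ≤ col 0 p := by
      intro p
      show 0 ≤ P 0 p i
      rw [hP0]
      by_cases h : p = i <;> simp [Matrix.one_apply, h]
    have hs : Finset.univ.sup' Finset.univ_nonempty (col 0) ≤ 1 :=
      Finset.sup'_le _ _ fun p _ => h1 p
    have hi : (0:ℝ) ≤ Finset.univ.inf' Finset.univ_nonempty (col 0) :=
      Finset.le_inf' _ _ fun p _ => h0 p
    show _ - _ ≤ (1:ℝ)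
    linarith
  have hoscn : ∀ n : ℕ, osc (col n) ≤ r ^ n := by
    intro n
    induction n with
    | zero => simpa using hosc0
    | succ n ih =>
      have hcast : ((n+1 : ℕ) : ℝ) = 1 + (n:ℝ) := by push_cast; ring
      rw [hcast]
      calc osc (col (1 + (n:ℝ))) ≤ r * osc (col n) := hstep n (by positivity)
        _ ≤ r * r ^ n := mul_le_mul_of_nonneg_left ih (le_of_lt hr_pos)
        _ = r ^ (n+1) := by ring
  have hosct : ∀ t : ℝ, 0 ≤ t → osc (col t) ≤ r ^ (⌊t⌋₊) := by
    intro t ht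
    have hfl : ((⌊t⌋₊ : ℕ) : ℝ) ≤ t := Nat.floor_le ht
    have heq : t = (t - ⌊t⌋₊) + ⌊t⌋₊ := by ring
    calc osc (col t) = osc (col ((t - ⌊t⌋₊) + ⌊t⌋₊)) := by rw [← heq]
      _ ≤ osc (col (⌊t⌋₊)) := hmono _ (by linarith) _
      _ ≤ r ^ (⌊t⌋₊) := hoscn _
  have hrn : ∀ t : ℝ, 0 ≤ t → r ^ (⌊t⌋₊) ≤ Real.exp β * Real.exp (-β * t) := by
    intro t ht
    have hlog : Real.log r < 0 := Real.log_neg hr_pos hr_lt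
    have h1 : r ^ (⌊t⌋₊) = Real.exp ((⌊t⌋₊ : ℝ) * Real.log r) := by
      rw [Real.exp_nat_mul, Real.exp_log hr_pos]
    have hfl : t - 1 ≤ ((⌊t⌋₊ : ℕ) : ℝ) := by
      have := Nat.lt_floor_add_one t
      linarith
    rw [h1, ← Real.exp_add]
    apply Real.exp_le_exp.2
    have hlogβ : Real.log r = -β := by rw [hβ]; ring
    rw [hlogβ]
    nlinarith
  refine ⟨(∑ p, |xi p|) * Real.exp β, ?_, β, hβpos, ?_⟩
  · have h1 : (1:ℝ) ≤ ∑ p, |xi p| := by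
      calc (1:ℝ) = |∑ p, xi p| := by rw [hxi1]; norm_num
        _ ≤ ∑ p, |xi p| := Finset.abs_sum_le_sum_abs _ _
    exact mul_pos (lt_of_lt_of_le one_pos h1) (Real.exp_pos _)
  · intro t ht
    have hXi : Xi i t i = P t i i := hrep t ht i i
    have hcomb : P t i i - xi i = ∑ p, xi p * (col t i - col t p) := by
      calc P t i i - xi i = (∑ p, xi p) * P t i i - ∑ p, xi p * P t p i := by
            rw [hxi1, one_mul, hPxi t i]
        _ = ∑ p, xi p * (col t i - col t p) := by
            rw [Finset.sum_mul, ← Finset.sum_sub_distrib]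
            exact Finset.sum_congr rfl fun p _ => by show _ = xi p * (P t i i - P t p i); ring
    have habs : |P t i i - xi i| ≤ (∑ p, |xi p|) * osc (col t) := by
      rw [hcomb]
      calc |∑ p, xi p * (col t i - col t p)|
          ≤ ∑ p, |xi p * (col t i - col t p)| := Finset.abs_sum_le_sum_abs _ _
        _ ≤ ∑ p, |xi p| * osc (col t) := Finset.sum_le_sum fun p _ => by
            rw [abs_mul]
            exact mul_le_mul_of_nonneg_left (abs_sub_le_osc _ _ _) (abs_nonneg _)
        _ = (∑ p, |xi p|) * osc (col t) := (Finset.sum_mul _ _ _).symm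
    rw [hXi]
    have hsum_nn : (0:ℝ) ≤ ∑ p, |xi p| := Finset.sum_nonneg fun p _ => abs_nonneg _
    calc |P t i i - xi i| ≤ (∑ p, |xi p|) * osc (col t) := habs
      _ ≤ (∑ p, |xi p|) * (Real.exp β * Real.exp (-β * t)) := by
          apply mul_le_mul_of_nonneg_left _ hsum_nn
          exact le_trans (hosct t ht) (hrn t ht)
      _ = (∑ p, |xi p|) * Real.exp β * Real.exp (-β * t) := by ring
end

section
/- Let L ∈ ℝ^{N×N} be the Laplacian of a weight-balanced strongly connected digraph (so L 1 = 0, 1ᵀL = 0, and the kernel of L is spanned by 1), let α > 0, and let each J_i : ℝ^N → ℝ be continuously differentiable. If Z* ∈ ℝ^{N×N} is an equilibrium of the seeking dynamics, i.e., α L Z* + diag(𝐅(Z*)) = 0 (entrywise: α Σ_k L_{ik} Z*_{kj} + δ_{ij} 𝐅(Z*)_i = 0 for all i, j), then there exists θ ∈ ℝ^N such that Z* = 1 θᵀ (all rows of Z* equal θ) and F(θ) = 0, i.e., ∂J_i/∂z_i(θ) = 0 for every i. -/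
open scoped BigOperators

/-- Kernel of the Laplacian-type quadratic form on a strongly connected digraph
consists of constant vectors. -/
lemma lap_ker_aux {N : ℕ} (hN : 1 ≤ N)
    (a : Fin N → Fin N → ℝ)
    (ha_nonneg : ∀ i j, 0 ≤ a i j)
    (hconn : ∀ S : Finset (Fin N), S.Nonempty → S ≠ Finset.univ →
      ∃ i ∈ S, ∃ j, j ∉ S ∧ 0 < a i j)
    (x : Fin N → ℝ)
    (hx : ∀ i, ∑ k, a i k * (x i - x k) = 0) :
    ∀ i j, x i = x j := by
  have : Nonempty (Fin N) := ⟨⟨0, hN⟩⟩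
  have hne : (Finset.univ : Finset (Fin N)).Nonempty := Finset.univ_nonempty
  set M := Finset.univ.sup' hne x with hM
  have hle : ∀ i, x i ≤ M := fun i => Finset.le_sup' x (Finset.mem_univ i)
  have hall : ∀ i, x i = M := by
    by_contra hc
    push_neg at hc
    set S := Finset.univ.filter (fun i => x i = M) with hS
    have hSne : S.Nonempty := by
      obtain ⟨i, _, hi⟩ := Finset.exists_mem_eq_sup' hne x
      exact ⟨i, by simp [hS, hi.symm]; exact hM.symm⟩
    have hSne' : S ≠ Finset.univ := by
      obtain ⟨i, hi⟩ := hc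
      intro h
      have : i ∈ S := h ▸ Finset.mem_univ i
      exact hi (Finset.mem_filter.mp this).2
    obtain ⟨i, hiS, j, hjS, haij⟩ := hconn S hSne hSne'
    have hxi : x i = M := (Finset.mem_filter.mp hiS).2
    have hxj : x j < M := by
      refine lt_of_le_of_ne (hle j) fun h => hjS ?_
      simp [hS, h]
    have hnn : ∀ k ∈ Finset.univ, 0 ≤ a i k * (x i - x k) := by
      intro k _
      exact mul_nonneg (ha_nonneg i k) (by rw [hxi]; linarith [hle k])
    have hzero := (Finset.sum_eq_zero_iff_of_nonneg hnn).mp (hx i) j (Finset.mem_univ j)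
    have hpos : 0 < a i j * (x i - x j) := mul_pos haij (by rw [hxi]; linarith)
    linarith
  intro i j; rw [hall i, hall j]

/-- Any equilibrium of the seeking dynamics
`α L Z* + diag(𝐅(Z*)) = 0` over a weight-balanced strongly connected digraph is a
consensus matrix `Z* = 1 θᵀ` with `F(θ) = 0`, i.e. `∂J_i/∂z_i(θ) = 0` for every `i`. -/
theorem equilibrium_is_nash
    (N : ℕ) (hN : 1 ≤ N)
    -- the weighted digraph and its Laplacian
    (a : Fin N → Fin N → ℝ) (L : Matrix (Fin N) (Fin N) ℝ)
    (ha_nonneg : ∀ i j, 0 ≤ a i j) (ha_diag : ∀ i, a i i = 0)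
    (hLdef : ∀ i j, L i j = if i = j then ∑ k, a i k else -(a i j))
    -- strongly connected (irreducible adjacency matrix)
    (hconn : ∀ S : Finset (Fin N), S.Nonempty → S ≠ Finset.univ →
      ∃ i ∈ S, ∃ j, j ∉ S ∧ 0 < a i j)
    -- weight-balanced: 1ᵀ L = 0
    (hbal : ∀ j, ∑ i, L i j = 0)
    -- the gain
    (α : ℝ) (hα : 0 < α)
    -- continuously differentiable cost functions
    (J : Fin N → (Fin N → ℝ) → ℝ) (hJ : ∀ i, ContDiff ℝ 1 (J i))
    -- an equilibrium of the seeking dynamics: α L Z* + diag(𝐅(Z*)) = 0, entrywise,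
    -- where 𝐅(Z*)_i = (∂J_i/∂z_i)(Zⁱ) is evaluated at row i of Z*.
    (Zstar : Matrix (Fin N) (Fin N) ℝ)
    (hEq : ∀ i j, α * (∑ k, L i k * Zstar k j) +
      (if i = j then
        deriv (fun y : ℝ => J i (Function.update (Zstar i) i y)) (Zstar i i)
       else 0) = 0) :
    ∃ θ : Fin N → ℝ, (∀ i j, Zstar i j = θ j) ∧
      ∀ i, deriv (fun y : ℝ => J i (Function.update θ i y)) (θ i) = 0 := by
  -- Step 1: each derivative vanishes (sum the equilibrium equation over rows).
  have hD : ∀ j, deriv (fun y : ℝ => J j (Function.update (Zstar j) j y)) (Zstar j j) = 0 := by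
    intro j
    have h1 : ∑ i, (α * (∑ k, L i k * Zstar k j) +
        (if i = j then
          deriv (fun y : ℝ => J i (Function.update (Zstar i) i y)) (Zstar i i)
         else 0)) = 0 := Finset.sum_eq_zero fun i _ => hEq i j
    rw [Finset.sum_add_distrib] at h1
    have h2 : ∑ i, α * (∑ k, L i k * Zstar k j) = 0 := by
      rw [← Finset.mul_sum, Finset.sum_comm]
      have h3 : ∀ k, ∑ i, L i k * Zstar k j = 0 := fun k => by
        rw [← Finset.sum_mul, hbal k, zero_mul]
      simp [h3]
    rw [h2, zero_add, Finset.sum_ite_eq' Finset.univ j] at h1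
    simpa using h1
  -- Step 2: L Z* = 0.
  have hLZ : ∀ i j, ∑ k, L i k * Zstar k j = 0 := by
    intro i j
    have h := hEq i j
    by_cases hij : i = j
    · subst hij
      rw [if_pos rfl, hD i, add_zero] at h
      exact (mul_eq_zero.mp h).resolve_left hα.ne'
    · rw [if_neg hij, add_zero] at h
      exact (mul_eq_zero.mp h).resolve_left hα.ne'
  -- Rewrite L in terms of a.
  have hform : ∀ (x : Fin N → ℝ) i, ∑ k, L i k * x k = ∑ k, a i k * (x i - x k) := by
    intro x i
    have e : ∀ k, L i k * x k = (if i = k then (∑ m, a i m) * x k else 0) - a i k * x k := by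
      intro k
      rw [hLdef i k]
      split_ifs with h
      · subst h; rw [ha_diag]; ring
      · ring
    calc ∑ k, L i k * x k
        = ∑ k, ((if i = k then (∑ m, a i m) * x k else 0) - a i k * x k) :=
          Finset.sum_congr rfl fun k _ => e k
      _ = (∑ m, a i m) * x i - ∑ k, a i k * x k := by
          rw [Finset.sum_sub_distrib, Finset.sum_ite_eq]
          simp
      _ = ∑ k, a i k * (x i - x k) := by
          rw [Finset.sum_mul, ← Finset.sum_sub_distrib]
          exact Finset.sum_congr rfl fun k _ => by ring
  -- Step 3: each column of Z* is constant.
  have hcol : ∀ j i i', Zstar i j = Zstar i' j := by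
    intro j
    exact lap_ker_aux hN a ha_nonneg hconn (fun k => Zstar k j)
      (fun i => by rw [← hform (fun k => Zstar k j) i]; exact hLZ i j)
  refine ⟨fun j => Zstar j j, fun i j => hcol j i j, fun i => ?_⟩
  have hθ : (fun j => Zstar j j) = Zstar i := funext fun k => hcol k k i
  rw [hθ]
  exact hD i
end

section
/- Assume F is l̲-strongly monotone with l̲ > 0, and both F and 𝐅 are l-Lipschitz with l > 0. Let z* ∈ ℝ^N, set Z* = 1 (z*)ᵀ ∈ ℝ^{N×N}, and for any Z ∈ ℝ^{N×N} write Z̃ = Z − Z*, C = (1/N) 1 1ᵀ Z̃ (the consensus component of Z̃, whose rows all equal the average of the rows of Z̃), and D = Z̃ − C. Then Σ_{i=1}^N Z̃_{ii} (𝐅(Z)_i − 𝐅(Z*)_i) ≥ (l̲/N) ‖C‖² − (2l/√N) ‖C‖ ‖D‖ − l ‖D‖², where ‖·‖ is the Frobenius norm. -/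
open scoped BigOperators

lemma vnorm_nonneg {N : ℕ} (x : Fin N → ℝ) : 0 ≤ vnorm x := Real.sqrt_nonneg _

lemma mnorm_nonneg {N : ℕ} (A : Matrix (Fin N) (Fin N) ℝ) : 0 ≤ mnorm A :=
  Real.sqrt_nonneg _

lemma vnorm_sq {N : ℕ} (x : Fin N → ℝ) : vnorm x ^ 2 = ∑ i, (x i) ^ 2 :=
  Real.sq_sqrt (by positivity)

lemma abs_sum_mul_le {N : ℕ} (a b : Fin N → ℝ) :
    |∑ i, a i * b i| ≤ vnorm a * vnorm b := by
  have h := Finset.sum_mul_sq_le_sq_mul_sq Finset.univ a b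
  have h2 : (|∑ i, a i * b i|) ^ 2 ≤ (vnorm a * vnorm b) ^ 2 := by
    rw [sq_abs, mul_pow, vnorm_sq, vnorm_sq]; exact h
  calc |∑ i, a i * b i| = Real.sqrt ((∑ i, a i * b i) ^ 2) := (Real.sqrt_sq_eq_abs _).symm
    _ ≤ Real.sqrt ((vnorm a * vnorm b) ^ 2) := Real.sqrt_le_sqrt (by
        have := sq_abs (∑ i, a i * b i); nlinarith)
    _ = vnorm a * vnorm b := Real.sqrt_sq (mul_nonneg (vnorm_nonneg a) (vnorm_nonneg b))

lemma neg_vnorm_mul_le {N : ℕ} (a b : Fin N → ℝ) :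
    -(vnorm a * vnorm b) ≤ ∑ i, a i * b i := by
  have := abs_sum_mul_le a b
  have := neg_abs_le (∑ i, a i * b i)
  linarith

/-- The key cross-term estimate: with `Z̃ = Z − 1(z*)ᵀ`,
`C = (1/N)11ᵀZ̃` (consensus component) and `D = Z̃ − C`,
`Σ_i Z̃_{ii} (𝐅(Z)_i − 𝐅(Z*)_i) ≥ (l̲/N)‖C‖² − (2l/√N)‖C‖‖D‖ − l‖D‖²`. -/
theorem cross_term_estimate
    (N : ℕ) (hN : 1 ≤ N)
    -- pseudogradient `F` and extended pseudogradient `𝐅` (row-wise evaluation)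
    (F : (Fin N → ℝ) → (Fin N → ℝ)) (bF : Matrix (Fin N) (Fin N) ℝ → (Fin N → ℝ))
    (hbF : ∀ Z i, bF Z i = F (Z i) i)
    (lunder l : ℝ) (hlunder : 0 < lunder) (hl : 0 < l)
    -- F is l̲-strongly monotone
    (hmono : ∀ x y : Fin N → ℝ,
      lunder * (vnorm (x - y)) ^ 2 ≤ ∑ i, (F x i - F y i) * (x i - y i))
    -- F and 𝐅 are both l-Lipschitz
    (hFlip : ∀ x y : Fin N → ℝ, vnorm (F x - F y) ≤ l * vnorm (x - y))
    (hbFlip : ∀ Z W : Matrix (Fin N) (Fin N) ℝ,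
      vnorm (bF Z - bF W) ≤ l * mnorm (Z - W))
    -- the point z*, the matrix Z* = 1 (z*)ᵀ, and the decomposition Z̃ = C + D
    (zstar : Fin N → ℝ) (Z Zstar Zt C D : Matrix (Fin N) (Fin N) ℝ)
    (hZstar : Zstar = Matrix.of (fun _ j => zstar j))
    (hZt : Zt = Z - Zstar)
    (hC : C = Matrix.of (fun _ j => (∑ k, Zt k j) / N))
    (hD : D = Zt - C) :
    (lunder / N) * (mnorm C) ^ 2 - (2 * l / Real.sqrt N) * mnorm C * mnorm D
        - l * (mnorm D) ^ 2
      ≤ ∑ i, Zt i i * (bF Z i - bF Zstar i) := by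
  have hNpos : (0:ℝ) < N := by exact_mod_cast Nat.lt_of_lt_of_le Nat.zero_lt_one hN
  have hsN : (0:ℝ) < Real.sqrt N := Real.sqrt_pos.2 hNpos
  set c : Fin N → ℝ := fun j => (∑ k, Zt k j) / N with hc
  have hCij : ∀ i j, C i j = c j := by intro i j; rw [hC]; rfl
  set zbar : Fin N → ℝ := fun j => zstar j + c j with hzbar
  set Zbar : Matrix (Fin N) (Fin N) ℝ := Matrix.of (fun _ j => zbar j) with hZbar
  have hbFZbar : ∀ i, bF Zbar i = F zbar i := fun i => hbF Zbar i
  have hbFZstar : ∀ i, bF Zstar i = F zstar i := by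
    intro i; rw [hbF, hZstar]; rfl
  -- zbar - zstar = c
  have hzbs : zbar - zstar = c := by funext j; simp [hzbar]
  -- Z - Zbar = D
  have hZZbar : Z - Zbar = D := by
    ext i j
    have : Zt i j = Z i j - zstar j := by rw [hZt, hZstar]; rfl
    simp [hZbar, hD, hCij, this, hzbar]
    ring
  -- mnorm C = sqrt N * vnorm c
  have hmC : mnorm C = Real.sqrt N * vnorm c := by
    rw [mnorm, vnorm, ← Real.sqrt_mul (le_of_lt hNpos)]
    congr 1
    simp only [hCij]
    rw [Finset.sum_const, Finset.card_univ, Fintype.card_fin, nsmul_eq_mul]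
  -- Term 1 : strong monotonicity
  have hT1 : lunder * (vnorm c) ^ 2 ≤ ∑ i, c i * (F zbar i - F zstar i) := by
    have := hmono zbar zstar
    rw [hzbs] at this
    calc lunder * vnorm c ^ 2 ≤ ∑ i, (F zbar i - F zstar i) * ((zbar - zstar) i) := this
      _ = ∑ i, c i * (F zbar i - F zstar i) := by
          refine Finset.sum_congr rfl (fun i _ => ?_)
          rw [hzbs]; ring
  -- Term 2
  have hbound2 : vnorm (bF Z - bF Zbar) ≤ l * mnorm D := by
    have := hbFlip Z Zbar; rwa [hZZbar] at this
  have hT2 : -(vnorm c * (l * mnorm D)) ≤ ∑ i, c i * (bF Z i - bF Zbar i) := by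
    have h1 := neg_vnorm_mul_le c (fun i => bF Z i - bF Zbar i)
    have h2 : vnorm (fun i => bF Z i - bF Zbar i) = vnorm (bF Z - bF Zbar) := rfl
    have h3 : vnorm c * vnorm (bF Z - bF Zbar) ≤ vnorm c * (l * mnorm D) :=
      mul_le_mul_of_nonneg_left hbound2 (vnorm_nonneg c)
    rw [h2] at h1
    linarith
  -- diag bound
  have hdiag : vnorm (fun i => D i i) ≤ mnorm D := by
    apply Real.sqrt_le_sqrt
    apply Finset.sum_le_sum
    intro i _
    exact Finset.single_le_sum (f := fun j => (D i j)^2) (fun j _ => sq_nonneg _)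
      (Finset.mem_univ i)
  -- Term 3
  have hboundF : vnorm (F zbar - F zstar) ≤ l * vnorm c := by
    have := hFlip zbar zstar; rwa [hzbs] at this
  have hT3 : -(mnorm D * (l * vnorm c)) ≤ ∑ i, D i i * (F zbar i - F zstar i) := by
    have h1 := neg_vnorm_mul_le (fun i => D i i) (fun i => F zbar i - F zstar i)
    have h2 : vnorm (fun i => F zbar i - F zstar i) = vnorm (F zbar - F zstar) := rfl
    rw [h2] at h1
    have h3 : vnorm (fun i => D i i) * vnorm (F zbar - F zstar) ≤ mnorm D * (l * vnorm c) :=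
      mul_le_mul hdiag hboundF (vnorm_nonneg _) (mnorm_nonneg D)
    linarith
  -- Term 4
  have hT4 : -(mnorm D * (l * mnorm D)) ≤ ∑ i, D i i * (bF Z i - bF Zbar i) := by
    have h1 := neg_vnorm_mul_le (fun i => D i i) (fun i => bF Z i - bF Zbar i)
    have h2 : vnorm (fun i => bF Z i - bF Zbar i) = vnorm (bF Z - bF Zbar) := rfl
    rw [h2] at h1
    have h3 : vnorm (fun i => D i i) * vnorm (bF Z - bF Zbar) ≤ mnorm D * (l * mnorm D) :=
      mul_le_mul hdiag hbound2 (vnorm_nonneg _) (mnorm_nonneg D)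
    linarith
  -- decomposition of the sum
  have hdecomp : ∑ i, Zt i i * (bF Z i - bF Zstar i)
      = (∑ i, c i * (F zbar i - F zstar i)) + (∑ i, c i * (bF Z i - bF Zbar i))
        + (∑ i, D i i * (F zbar i - F zstar i)) + (∑ i, D i i * (bF Z i - bF Zbar i)) := by
    rw [← Finset.sum_add_distrib, ← Finset.sum_add_distrib, ← Finset.sum_add_distrib]
    refine Finset.sum_congr rfl (fun i _ => ?_)
    have hZtii : Zt i i = c i + D i i := by
      have : D i i = Zt i i - C i i := by rw [hD]; rfl
      rw [this, hCij]; ring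
    rw [hZtii, hbFZbar, hbFZstar]
    ring
  -- put everything together
  rw [hdecomp, hmC]
  have hN2 : (lunder / N) * (Real.sqrt N * vnorm c) ^ 2 = lunder * (vnorm c) ^ 2 := by
    rw [mul_pow, Real.sq_sqrt (le_of_lt hNpos)]
    field_simp
  have hN3 : (2 * l / Real.sqrt N) * (Real.sqrt N * vnorm c) * mnorm D
      = 2 * l * vnorm c * mnorm D := by
    field_simp
  rw [hN2, hN3]
  nlinarith [hT1, hT2, hT3, hT4]
end

section
/- Let L ∈ ℝ^{N×N} be the Laplacian of a strongly connected weighted digraph, and let ξ ∈ ℝ^N be the vector with ξᵀL = 0 and ξᵀ1 = 1. Then there exist constants c > 0 and β > 0 such that ‖exp(−tL) − 1 ξᵀ‖ ≤ c e^{−β t} for all t ≥ 0, where 1 ξᵀ is the rank-one matrix with (i,j) entry ξ_j. In particular, every solution of θ̇(t) = −L θ(t) converges exponentially to (ξᵀθ(0)) 1 as t → ∞. -/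
open scoped BigOperators

section Helpers

variable {N : ℕ}

lemma exp_hasSum (A : Matrix (Fin N) (Fin N) ℝ) :
    HasSum (fun n : ℕ => ((n.factorial :ℝ)⁻¹) • A ^ n) (NormedSpace.exp A) := by
  letI : NormedRing (Matrix (Fin N) (Fin N) ℝ) := Matrix.linftyOpNormedRing
  letI : NormedAlgebra ℝ (Matrix (Fin N) (Fin N) ℝ) := Matrix.linftyOpNormedAlgebra
  have h := (NormedSpace.expSeries_summable' (𝕂 := ℝ) (x := A)).hasSum
  have e : NormedSpace.exp A = ∑' n : ℕ, ((n.factorial:ℝ)⁻¹) • A ^ n :=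
    congrFun (NormedSpace.exp_eq_tsum ℝ) A
  rw [e]; exact h

lemma exp_entry_hasSum (A : Matrix (Fin N) (Fin N) ℝ) (i j : Fin N) :
    HasSum (fun n : ℕ => ((n.factorial:ℝ)⁻¹) * ((A ^ n) i j)) ((NormedSpace.exp A) i j) := by
  have h := (exp_hasSum A).map (AddMonoidHomClass.toAddMonoidHom (Matrix.entryLinearMap ℝ ℝ i j))
    (by exact (continuous_apply j).comp (continuous_apply i))
  simpa [Function.comp_def, smul_eq_mul] using h

lemma exp_mulVec_hasSum (A : Matrix (Fin N) (Fin N) ℝ) (v : Fin N → ℝ) :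
    HasSum (fun n : ℕ => ((n.factorial:ℝ)⁻¹) • ((A ^ n).mulVec v))
      ((NormedSpace.exp A).mulVec v) := by
  have hc : Continuous (fun M : Matrix (Fin N) (Fin N) ℝ => M.mulVec v) := by
    refine continuous_pi fun i => ?_
    simp only [Matrix.mulVec, dotProduct]
    fun_prop
  have h := (exp_hasSum A).map
    (AddMonoidHom.mk' (fun M : Matrix (Fin N) (Fin N) ℝ => M.mulVec v)
      (fun M₁ M₂ => Matrix.add_mulVec M₁ M₂ v)) hc
  simpa [Function.comp_def, Matrix.smul_mulVec] using h

lemma exp_mulVec_of_mulVec_eq_zero (A : Matrix (Fin N) (Fin N) ℝ) (v : Fin N → ℝ)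
    (hv : A.mulVec v = 0) : (NormedSpace.exp A).mulVec v = v := by
  have h := exp_mulVec_hasSum A v
  have h0 : ∀ n : ℕ, n ≠ 0 → ((n.factorial:ℝ)⁻¹) • ((A ^ n).mulVec v) = 0 := by
    intro n hn
    obtain ⟨m, rfl⟩ := Nat.exists_eq_succ_of_ne_zero hn
    rw [pow_succ, ← Matrix.mulVec_mulVec, hv, Matrix.mulVec_zero, smul_zero]
  have h1 : HasSum (fun n : ℕ => ((n.factorial:ℝ)⁻¹) • ((A ^ n).mulVec v)) v := by
    have heq : (fun n : ℕ => ((n.factorial:ℝ)⁻¹) • ((A ^ n).mulVec v))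
        = fun n : ℕ => if n = 0 then v else 0 := by
      funext n
      by_cases hn : n = 0
      · subst hn; simp
      · simp [hn, h0 n hn]
    rw [heq]; exact hasSum_ite_eq 0 v
  exact h.unique h1

lemma pow_entry_nonneg {B : Matrix (Fin N) (Fin N) ℝ} (hB : ∀ i j, 0 ≤ B i j) :
    ∀ n : ℕ, ∀ i j, 0 ≤ (B ^ n) i j := by
  intro n
  induction n with
  | zero => intro i j; by_cases h : i = j <;> simp [Matrix.one_apply, h]
  | succ m ih =>
    intro i j
    rw [pow_succ, Matrix.mul_apply]
    exact Finset.sum_nonneg fun k _ => mul_nonneg (ih i k) (hB k j)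

lemma exp_entry_ge {B : Matrix (Fin N) (Fin N) ℝ} (hB : ∀ i j, 0 ≤ B i j) (m : ℕ) (i j : Fin N) :
    ((m.factorial:ℝ)⁻¹) * ((B ^ m) i j) ≤ (NormedSpace.exp B) i j := by
  refine hasSum_le (f := fun n : ℕ => if n = m then ((m.factorial:ℝ)⁻¹) * ((B ^ m) i j) else 0)
    ?_ (hasSum_ite_eq m _) (exp_entry_hasSum B i j)
  intro n
  by_cases hn : n = m
  · subst hn; simp
  · simp only [hn, if_false]
    exact mul_nonneg (by positivity) (pow_entry_nonneg hB n i j)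

lemma exp_entry_nonneg {B : Matrix (Fin N) (Fin N) ℝ} (hB : ∀ i j, 0 ≤ B i j) (i j : Fin N) :
    0 ≤ (NormedSpace.exp B) i j := by
  have h := exp_entry_ge hB 0 i j
  refine le_trans ?_ h
  simp only [pow_zero, Nat.factorial_zero]
  by_cases hij : i = j <;> simp [Matrix.one_apply, hij]

lemma exp_smul_one (c : ℝ) :
    NormedSpace.exp (c • (1 : Matrix (Fin N) (Fin N) ℝ)) = Real.exp c • 1 := by
  rw [Matrix.smul_one_eq_diagonal, Matrix.exp_diagonal, Real.exp_eq_exp_ℝ]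
  rw [Matrix.smul_one_eq_diagonal]
  simp [Pi.exp_def]

lemma exp_smul_entry_hasDerivAt (L : Matrix (Fin N) (Fin N) ℝ) (t : ℝ) (i k : Fin N) :
    HasDerivAt (fun u : ℝ => (NormedSpace.exp (u • L)) i k)
      ((NormedSpace.exp (t • L) * L) i k) t := by
  letI : NormedRing (Matrix (Fin N) (Fin N) ℝ) := Matrix.linftyOpNormedRing
  letI : NormedAlgebra ℝ (Matrix (Fin N) (Fin N) ℝ) := Matrix.linftyOpNormedAlgebra
  have h := hasDerivAt_exp_smul_const (𝕂 := ℝ) L t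
  have he : ∀ M : Matrix (Fin N) (Fin N) ℝ,
      (LinearMap.toContinuousLinearMap (Matrix.entryLinearMap ℝ ℝ i k)) M = M i k := fun M => by
    simp
  exact
    (LinearMap.toContinuousLinearMap
      (Matrix.entryLinearMap ℝ ℝ i k)).hasFDerivAt.comp_hasDerivAt t h

lemma reach (a : Fin N → Fin N → ℝ) (B : Matrix (Fin N) (Fin N) ℝ)
    (ha_diag : ∀ i, a i i = 0)
    (hBnn : ∀ i j, 0 ≤ B i j)
    (hBoff : ∀ i j, i ≠ j → a i j ≤ B i j)
    (hconn : ∀ S : Finset (Fin N), S.Nonempty → S ≠ Finset.univ →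
      ∃ i ∈ S, ∃ j, j ∉ S ∧ 0 < a i j)
    (i j : Fin N) : ∃ m : ℕ, 0 < (B ^ m) i j := by
  classical
  set S : Finset (Fin N) := Finset.univ.filter (fun j => ∃ m : ℕ, 0 < (B ^ m) i j) with hS
  have hiS : i ∈ S := by
    simp only [hS, Finset.mem_filter, Finset.mem_univ, true_and]
    exact ⟨0, by simp [Matrix.one_apply]⟩
  have hSuniv : S = Finset.univ := by
    by_contra hne
    obtain ⟨i', hi'S, j', hj'S, hpos⟩ := hconn S ⟨i, hiS⟩ hne
    obtain ⟨m, hm⟩ : ∃ m : ℕ, 0 < (B ^ m) i i' := by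
      simpa only [hS, Finset.mem_filter, Finset.mem_univ, true_and] using hi'S
    have hij' : i' ≠ j' := by
      rintro rfl
      rw [ha_diag i'] at hpos
      exact lt_irrefl 0 hpos
    have hBij : 0 < B i' j' := lt_of_lt_of_le hpos (hBoff i' j' hij')
    have hnew : 0 < (B ^ (m + 1)) i j' := by
      rw [pow_succ, Matrix.mul_apply]
      refine lt_of_lt_of_le (mul_pos hm hBij) ?_
      exact Finset.single_le_sum (f := fun k => (B ^ m) i k * B k j')
        (fun k _ => mul_nonneg (pow_entry_nonneg hBnn m i k) (hBnn k j'))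
        (Finset.mem_univ i')
    exact hj'S (by
      simp only [hS, Finset.mem_filter, Finset.mem_univ, true_and]
      exact ⟨m + 1, hnew⟩)
  have : j ∈ S := hSuniv ▸ Finset.mem_univ j
  simpa only [hS, Finset.mem_filter, Finset.mem_univ, true_and] using this

noncomputable def vmax [NeZero N] (x : Fin N → ℝ) : ℝ := Finset.univ.sup' Finset.univ_nonempty x
noncomputable def vmin [NeZero N] (x : Fin N → ℝ) : ℝ := Finset.univ.inf' Finset.univ_nonempty x
noncomputable def osc [NeZero N] (x : Fin N → ℝ) : ℝ := vmax x - vmin x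

lemma le_vmax [NeZero N] (x : Fin N → ℝ) (i : Fin N) : x i ≤ vmax x :=
  Finset.le_sup' x (Finset.mem_univ i)
lemma vmin_le [NeZero N] (x : Fin N → ℝ) (i : Fin N) : vmin x ≤ x i :=
  Finset.inf'_le x (Finset.mem_univ i)
lemma vmax_le [NeZero N] {x : Fin N → ℝ} {c : ℝ} (h : ∀ i, x i ≤ c) : vmax x ≤ c :=
  Finset.sup'_le _ _ fun i _ => h i
lemma le_vmin [NeZero N] {x : Fin N → ℝ} {c : ℝ} (h : ∀ i, c ≤ x i) : c ≤ vmin x :=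
  Finset.le_inf' _ _ fun i _ => h i
lemma osc_nonneg [NeZero N] (x : Fin N → ℝ) : 0 ≤ osc x := by
  have i : Fin N := Classical.arbitrary _
  have := (vmin_le x i).trans (le_vmax x i)
  simpa [osc, sub_nonneg] using this

lemma abs_sub_le_osc [NeZero N] (x : Fin N → ℝ) (i k : Fin N) : |x i - x k| ≤ osc x := by
  rw [abs_sub_le_iff]
  constructor
  · unfold osc; linarith [le_vmax x i, vmin_le x k]
  · unfold osc; linarith [le_vmax x k, vmin_le x i]

section contract
variable [NeZero N] (M : Matrix (Fin N) (Fin N) ℝ) (ε : ℝ)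
  (hM : ∀ i j, ε ≤ M i j) (hrow : ∀ i, ∑ j, M i j = 1) (x : Fin N → ℝ)

include hM hrow

lemma q_nonneg : 0 ≤ 1 - (N:ℝ) * ε := by
  have i : Fin N := Classical.arbitrary _
  have h : (0:ℝ) ≤ ∑ j, (M i j - ε) := Finset.sum_nonneg fun j _ => sub_nonneg.2 (hM i j)
  rw [Finset.sum_sub_distrib, hrow i] at h
  simpa [Finset.card_univ] using h

lemma mulVec_entry_upper (i : Fin N) :
    M.mulVec x i ≤ ε * (∑ j, x j) + (1 - (N:ℝ) * ε) * vmax x := by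
  have key : M.mulVec x i = ε * (∑ j, x j) + ∑ j, (M i j - ε) * x j := by
    simp [Matrix.mulVec, dotProduct, Finset.mul_sum, sub_mul,
      Finset.sum_sub_distrib]
  rw [key]
  have h2 : ∑ j, (M i j - ε) * x j ≤ ∑ j, (M i j - ε) * vmax x :=
    Finset.sum_le_sum fun j _ =>
      mul_le_mul_of_nonneg_left (le_vmax x j) (sub_nonneg.2 (hM i j))
  have h3 : ∑ j, (M i j - ε) * vmax x = (1 - (N:ℝ) * ε) * vmax x := by
    rw [← Finset.sum_mul, Finset.sum_sub_distrib, hrow i]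
    simp [Finset.card_univ]
  linarith

lemma mulVec_entry_lower (i : Fin N) :
    ε * (∑ j, x j) + (1 - (N:ℝ) * ε) * vmin x ≤ M.mulVec x i := by
  have key : M.mulVec x i = ε * (∑ j, x j) + ∑ j, (M i j - ε) * x j := by
    simp [Matrix.mulVec, dotProduct, Finset.mul_sum, sub_mul,
      Finset.sum_sub_distrib]
  rw [key]
  have h2 : ∑ j, (M i j - ε) * vmin x ≤ ∑ j, (M i j - ε) * x j :=
    Finset.sum_le_sum fun j _ =>
      mul_le_mul_of_nonneg_left (vmin_le x j) (sub_nonneg.2 (hM i j))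
  have h3 : ∑ j, (M i j - ε) * vmin x = (1 - (N:ℝ) * ε) * vmin x := by
    rw [← Finset.sum_mul, Finset.sum_sub_distrib, hrow i]
    simp [Finset.card_univ]
  linarith

lemma osc_mulVec_le : osc (M.mulVec x) ≤ (1 - (N:ℝ) * ε) * osc x := by
  have hu : vmax (M.mulVec x) ≤ ε * (∑ j, x j) + (1 - (N:ℝ) * ε) * vmax x :=
    vmax_le fun i => mulVec_entry_upper M ε hM hrow x i
  have hl : ε * (∑ j, x j) + (1 - (N:ℝ) * ε) * vmin x ≤ vmin (M.mulVec x) :=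
    le_vmin fun i => mulVec_entry_lower M ε hM hrow x i
  unfold osc
  nlinarith [q_nonneg M ε hM hrow]

end contract

end Helpers

lemma key_bound {N : ℕ} [NeZero N]
    (a : Fin N → Fin N → ℝ) (L : Matrix (Fin N) (Fin N) ℝ)
    (ha_nonneg : ∀ i j, 0 ≤ a i j) (ha_diag : ∀ i, a i i = 0)
    (hLdef : ∀ i j, L i j = if i = j then ∑ k, a i k else -(a i j))
    (hconn : ∀ S : Finset (Fin N), S.Nonempty → S ≠ Finset.univ →
      ∃ i ∈ S, ∃ j, j ∉ S ∧ 0 < a i j)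
    (xi : Fin N → ℝ)
    (hxiL : ∀ j, ∑ k, xi k * L k j = 0) (hxi1 : ∑ k, xi k = 1) :
    ∃ β > (0:ℝ), ∃ C ≥ (0:ℝ), ∀ t ≥ (0:ℝ), ∀ x : Fin N → ℝ, ∀ i : Fin N,
      |((NormedSpace.exp ((-t) • L)).mulVec x) i - ∑ k, xi k * x k| ≤
        C * osc x * Real.exp (-β * t) := by
  classical
  -- the dominating constant
  set d : ℝ := 1 + ∑ i, ∑ k, a i k with hd
  have hd_row : ∀ i, ∑ k, a i k ≤ d - 1 := by
    intro i
    rw [hd]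
    have := Finset.single_le_sum (f := fun i => ∑ k, a i k)
      (fun i _ => Finset.sum_nonneg fun k _ => ha_nonneg i k) (Finset.mem_univ i)
    simpa using this
  set B : Matrix (Fin N) (Fin N) ℝ := d • (1 : Matrix (Fin N) (Fin N) ℝ) - L with hB
  have hBnn : ∀ i j, 0 ≤ B i j := by
    intro i j
    rw [hB]
    by_cases h : i = j
    · subst h
      have hLii : L i i = ∑ k, a i k := by rw [hLdef i i, if_pos rfl]
      simp only [Matrix.sub_apply, Matrix.smul_apply, Matrix.one_apply_eq, smul_eq_mul, mul_one,
        hLii]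
      linarith [hd_row i]
    · simp only [Matrix.sub_apply, Matrix.smul_apply, Matrix.one_apply_ne h, smul_eq_mul,
        mul_zero, hLdef i j, if_neg h, zero_sub, neg_neg]
      exact ha_nonneg i j
  have hBoff : ∀ i j, i ≠ j → a i j ≤ B i j := by
    intro i j h
    rw [hB]
    simp only [Matrix.sub_apply, Matrix.smul_apply, Matrix.one_apply_ne h, smul_eq_mul,
      mul_zero, hLdef i j, if_neg h, zero_sub, neg_neg]
    exact le_rfl
  -- row sums of L vanish
  have hrowL : ∀ i, ∑ j, L i j = 0 := by
    intro i
    have h4 : ∑ j, L i j = L i i + ∑ j ∈ Finset.univ.erase i, L i j :=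
      (Finset.add_sum_erase (Finset.univ) (fun j => L i j) (Finset.mem_univ i)).symm
    have h1 : L i i = ∑ k, a i k := by rw [hLdef i i, if_pos rfl]
    have h2 : ∑ j ∈ Finset.univ.erase i, L i j = -∑ j ∈ Finset.univ.erase i, a i j := by
      rw [← Finset.sum_neg_distrib]
      refine Finset.sum_congr rfl fun j hj => ?_
      rw [hLdef i j, if_neg (Ne.symm (Finset.mem_erase.1 hj).1)]
    have h3 : ∑ j ∈ Finset.univ.erase i, a i j = ∑ k, a i k := by
      rw [← Finset.add_sum_erase (Finset.univ) (fun j => a i j) (Finset.mem_univ i),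
        ha_diag i, zero_add]
    rw [h4, h1, h2, h3]
    ring
  have hL1 : L.mulVec (fun _ => (1:ℝ)) = 0 := by
    funext i
    simp [Matrix.mulVec, dotProduct, hrowL i]
  -- splitting of the exponential
  have hsplit : ∀ t : ℝ, NormedSpace.exp ((-t) • L)
      = Real.exp (-(t*d)) • NormedSpace.exp (t • B) := by
    intro t
    have hsum : (-t) • L = (-(t*d)) • (1 : Matrix (Fin N) (Fin N) ℝ) + t • B := by
      rw [hB]; module
    have hcomm : Commute ((-(t*d)) • (1 : Matrix (Fin N) (Fin N) ℝ)) (t • B) :=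
      (Commute.one_left (t • B)).smul_left _
    have e1 : NormedSpace.exp ((-(t*d)) • (1 : Matrix (Fin N) (Fin N) ℝ) + t • B)
        = NormedSpace.exp ((-(t*d)) • (1 : Matrix (Fin N) (Fin N) ℝ))
          * NormedSpace.exp (t • B) :=
      Matrix.exp_add_of_commute _ _ hcomm
    rw [hsum, e1, exp_smul_one, smul_mul_assoc, one_mul]
  have hEnn : ∀ t : ℝ, 0 ≤ t → ∀ i j, 0 ≤ (NormedSpace.exp ((-t) • L)) i j := by
    intro t ht i j
    rw [hsplit t]
    have h1 : ∀ i j, 0 ≤ (t • B) i j := fun i j =>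
      mul_nonneg ht (hBnn i j)
    have := exp_entry_nonneg h1 i j
    simpa using mul_nonneg (Real.exp_nonneg _) this
  -- row sums of exp are one
  have hErow : ∀ t : ℝ, ∀ i, ∑ j, (NormedSpace.exp ((-t) • L)) i j = 1 := by
    intro t i
    have h0 : ((-t) • L).mulVec (fun _ => (1:ℝ)) = 0 := by
      rw [Matrix.smul_mulVec, hL1, smul_zero]
    have h := exp_mulVec_of_mulVec_eq_zero _ _ h0
    have := congrFun h i
    simpa [Matrix.mulVec, dotProduct] using this
  -- left eigenvector invariance
  have hxiE : ∀ t : ℝ, ∀ j, ∑ k, xi k * (NormedSpace.exp ((-t) • L)) k j = xi j := by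
    intro t j
    have h0 : ((-t) • L.transpose).mulVec xi = 0 := by
      funext j'
      simp only [Matrix.smul_mulVec, Pi.smul_apply, Pi.zero_apply, smul_eq_mul]
      have : L.transpose.mulVec xi j' = 0 := by
        simpa [Matrix.mulVec, dotProduct, Matrix.transpose_apply, mul_comm] using hxiL j'
      rw [this, mul_zero]
    have h := exp_mulVec_of_mulVec_eq_zero _ _ h0
    have hT : NormedSpace.exp ((-t) • L.transpose) = (NormedSpace.exp ((-t) • L)).transpose := by
      rw [← Matrix.transpose_smul, Matrix.exp_transpose]
    rw [hT] at h
    have := congrFun h j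
    simpa [Matrix.mulVec, dotProduct, Matrix.transpose_apply, mul_comm] using this
  -- the time-one map has positive entries
  set A : Matrix (Fin N) (Fin N) ℝ := NormedSpace.exp ((-(1:ℝ)) • L) with hA
  have hApos : ∀ i j, 0 < A i j := by
    intro i j
    obtain ⟨m, hm⟩ := reach a B ha_diag hBnn hBoff hconn i j
    have h1 : ((m.factorial:ℝ)⁻¹) * ((B ^ m) i j) ≤ (NormedSpace.exp B) i j :=
      exp_entry_ge hBnn m i j
    have h2 : 0 < (NormedSpace.exp B) i j :=
      lt_of_lt_of_le (by positivity) h1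
    rw [hA, hsplit 1]
    simpa [one_smul] using mul_pos (Real.exp_pos (-(1*d))) h2
  -- a uniform positive lower bound on the entries of A
  obtain ⟨ε, hε, hεle⟩ : ∃ ε > (0:ℝ), ∀ i j, ε ≤ A i j := by
    have hne : (Finset.univ : Finset (Fin N × Fin N)).Nonempty := Finset.univ_nonempty
    refine ⟨Finset.univ.inf' hne (fun p => A p.1 p.2), ?_, ?_⟩
    · exact (Finset.lt_inf'_iff hne).mpr fun p _ => hApos p.1 p.2
    · intro i j
      exact Finset.inf'_le _ (Finset.mem_univ (i, j))
  set q : ℝ := max (1 - (N:ℝ) * ε) (1/2) with hq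
  have hq0 : (0:ℝ) < q := lt_of_lt_of_le (by norm_num) (le_max_right _ _)
  have hq1 : q < 1 := by
    have hNpos : (0:ℝ) < N := by
      have := Nat.pos_of_ne_zero (NeZero.ne N)
      exact_mod_cast this
    apply max_lt
    · nlinarith
    · norm_num
  have hArow : ∀ i, ∑ j, A i j = 1 := fun i => hErow 1 i
  have hAcontract : ∀ x : Fin N → ℝ, osc (A.mulVec x) ≤ q * osc x := by
    intro x
    have h := osc_mulVec_le A ε hεle hArow x
    calc osc (A.mulVec x) ≤ (1 - (N:ℝ) * ε) * osc x := h
    _ ≤ q * osc x := mul_le_mul_of_nonneg_right (le_max_left _ _) (osc_nonneg x)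
  have hpow : ∀ n : ℕ, ∀ x : Fin N → ℝ, osc ((A ^ n).mulVec x) ≤ q ^ n * osc x := by
    intro n
    induction n with
    | zero => intro x; simp [Matrix.one_mulVec]
    | succ m ih =>
      intro x
      rw [pow_succ, ← Matrix.mulVec_mulVec]
      calc osc ((A^m).mulVec (A.mulVec x)) ≤ q ^ m * osc (A.mulVec x) := ih _
      _ ≤ q ^ m * (q * osc x) :=
        mul_le_mul_of_nonneg_left (hAcontract x) (pow_nonneg hq0.le m)
      _ = q ^ (m+1) * osc x := by ring
  -- semigroup decomposition
  have hE_decomp : ∀ t : ℝ, 0 ≤ t → NormedSpace.exp ((-t) • L)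
      = NormedSpace.exp ((-(t - (⌊t⌋₊:ℝ))) • L) * A ^ (⌊t⌋₊) := by
    intro t ht
    set n := ⌊t⌋₊ with hn
    have hcomm : Commute ((-(t - (n:ℝ))) • L) ((-(n:ℝ)) • L) :=
      ((Commute.refl L).smul_left _).smul_right _
    have e1 : NormedSpace.exp ((-(t - (n:ℝ))) • L + (-(n:ℝ)) • L)
        = NormedSpace.exp ((-(t - (n:ℝ))) • L) * NormedSpace.exp ((-(n:ℝ)) • L) :=
      Matrix.exp_add_of_commute _ _ hcomm
    have h2 : (-(n:ℝ)) • L = (n : ℕ) • ((-(1:ℝ)) • L) := by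
      rw [← Nat.cast_smul_eq_nsmul ℝ, smul_smul]
      congr 1
      ring
    have h3 : NormedSpace.exp ((-(n:ℝ)) • L) = A ^ n := by
      rw [h2, Matrix.exp_nsmul, hA]
    have h4 : (-t) • L = (-(t - (n:ℝ))) • L + (-(n:ℝ)) • L := by
      module
    rw [h4, e1, h3]
  -- oscillation decay
  have hosc : ∀ t : ℝ, 0 ≤ t → ∀ x : Fin N → ℝ,
      osc ((NormedSpace.exp ((-t) • L)).mulVec x) ≤ q ^ (⌊t⌋₊) * osc x := by
    intro t ht x
    rw [hE_decomp t ht, ← Matrix.mulVec_mulVec]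
    have hs : 0 ≤ t - (⌊t⌋₊:ℝ) := sub_nonneg.2 (Nat.floor_le ht)
    have h1 := osc_mulVec_le (NormedSpace.exp ((-(t - (⌊t⌋₊:ℝ))) • L)) 0
      (fun i j => hEnn _ hs i j) (fun i => hErow _ i) ((A ^ ⌊t⌋₊).mulVec x)
    simp only [mul_zero, sub_zero, one_mul] at h1
    exact h1.trans (hpow _ x)
  -- the exponential rate
  set β : ℝ := -Real.log q with hβdef
  have hβ : 0 < β := by
    have := Real.log_neg hq0 hq1
    simp only [hβdef]
    linarith
  have hqt : ∀ t : ℝ, 0 ≤ t → q ^ (⌊t⌋₊) ≤ Real.exp β * Real.exp (-β * t) := by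
    intro t ht
    have h1 : q ^ (⌊t⌋₊) = Real.exp ((⌊t⌋₊ : ℝ) * Real.log q) := by
      rw [Real.exp_nat_mul, Real.exp_log hq0]
    have hlog : Real.log q < 0 := Real.log_neg hq0 hq1
    have hfl : t - 1 ≤ (⌊t⌋₊ : ℝ) := by
      have := Nat.lt_floor_add_one t
      linarith
    have h2 : (⌊t⌋₊ : ℝ) * Real.log q ≤ (t - 1) * Real.log q :=
      mul_le_mul_of_nonpos_right hfl hlog.le
    have h3 : (t - 1) * Real.log q = β + (-β * t) := by
      simp only [hβdef]; ring
    rw [h1]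
    calc Real.exp ((⌊t⌋₊ : ℝ) * Real.log q) ≤ Real.exp ((t - 1) * Real.log q) :=
      Real.exp_le_exp.2 h2
    _ = Real.exp β * Real.exp (-β * t) := by rw [h3, Real.exp_add]
  refine ⟨β, hβ, (∑ k, |xi k|) * Real.exp β,
    mul_nonneg (Finset.sum_nonneg fun k _ => abs_nonneg _) (Real.exp_pos _).le, ?_⟩
  intro t ht x i
  set y : Fin N → ℝ := (NormedSpace.exp ((-t) • L)).mulVec x with hy
  have hyx : ∑ k, xi k * y k = ∑ k, xi k * x k := by
    have h1 : ∑ k, xi k * y k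
        = ∑ k, ∑ j, xi k * ((NormedSpace.exp ((-t) • L)) k j * x j) := by
      refine Finset.sum_congr rfl fun k _ => ?_
      rw [hy]
      simp [Matrix.mulVec, dotProduct, Finset.mul_sum]
    have h2 : ∑ k, ∑ j, xi k * ((NormedSpace.exp ((-t) • L)) k j * x j)
        = ∑ j, ∑ k, xi k * ((NormedSpace.exp ((-t) • L)) k j * x j) := Finset.sum_comm
    have h3 : ∀ j, ∑ k, xi k * ((NormedSpace.exp ((-t) • L)) k j * x j)
        = (∑ k, xi k * (NormedSpace.exp ((-t) • L)) k j) * x j := by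
      intro j
      rw [Finset.sum_mul]
      exact Finset.sum_congr rfl fun k _ => by ring
    rw [h1, h2]
    refine Finset.sum_congr rfl fun j _ => ?_
    rw [h3 j, hxiE t j]
  have h4 : y i - ∑ k, xi k * x k = ∑ k, xi k * (y i - y k) := by
    rw [← hyx]
    have h5 : ∑ k, xi k * (y i - y k) = (∑ k, xi k) * y i - ∑ k, xi k * y k := by
      simp [mul_sub, Finset.sum_sub_distrib, ← Finset.sum_mul]
    rw [h5, hxi1, one_mul]
  have h6 : |y i - ∑ k, xi k * x k| ≤ (∑ k, |xi k|) * osc y := by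
    rw [h4]
    calc |∑ k, xi k * (y i - y k)| ≤ ∑ k, |xi k * (y i - y k)| :=
      Finset.abs_sum_le_sum_abs _ _
    _ = ∑ k, |xi k| * |y i - y k| := by simp [abs_mul]
    _ ≤ ∑ k, |xi k| * osc y :=
      Finset.sum_le_sum fun k _ =>
        mul_le_mul_of_nonneg_left (abs_sub_le_osc y i k) (abs_nonneg _)
    _ = (∑ k, |xi k|) * osc y := by rw [← Finset.sum_mul]
  have h7 : osc y ≤ (Real.exp β * Real.exp (-β * t)) * osc x := by
    calc osc y ≤ q ^ (⌊t⌋₊) * osc x := hosc t ht x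
    _ ≤ (Real.exp β * Real.exp (-β * t)) * osc x :=
      mul_le_mul_of_nonneg_right (hqt t ht) (osc_nonneg x)
  calc |y i - ∑ k, xi k * x k| ≤ (∑ k, |xi k|) * osc y := h6
  _ ≤ (∑ k, |xi k|) * ((Real.exp β * Real.exp (-β * t)) * osc x) :=
    mul_le_mul_of_nonneg_left h7 (Finset.sum_nonneg fun k _ => abs_nonneg _)
  _ = (∑ k, |xi k|) * Real.exp β * osc x * Real.exp (-β * t) := by ring



/-- For the Laplacian `L` of a strongly connected weighted digraph with
normalized left eigenvector `ξ` (`ξᵀL = 0`, `ξᵀ1 = 1`), `exp(−tL)` converges exponentially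
to the rank-one matrix `1ξᵀ`; in particular every solution of `θ̇ = −Lθ` converges
exponentially to `(ξᵀθ(0)) 1`. -/
theorem exp_neg_laplacian_converges
    (N : ℕ) (hN : 1 ≤ N)
    -- the weighted digraph and its Laplacian
    (a : Fin N → Fin N → ℝ) (L : Matrix (Fin N) (Fin N) ℝ)
    (ha_nonneg : ∀ i j, 0 ≤ a i j) (ha_diag : ∀ i, a i i = 0)
    (hLdef : ∀ i j, L i j = if i = j then ∑ k, a i k else -(a i j))
    -- strongly connected (irreducible adjacency matrix)
    (hconn : ∀ S : Finset (Fin N), S.Nonempty → S ≠ Finset.univ →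
      ∃ i ∈ S, ∃ j, j ∉ S ∧ 0 < a i j)
    -- the normalized left eigenvector: ξᵀL = 0, ξᵀ1 = 1
    (xi : Fin N → ℝ)
    (hxiL : ∀ j, ∑ k, xi k * L k j = 0) (hxi1 : ∑ k, xi k = 1) :
    -- exponential convergence of exp(−tL) to 1ξᵀ
    (∃ c > (0:ℝ), ∃ β > (0:ℝ), ∀ t ≥ (0:ℝ),
      mnorm (NormedSpace.exp ((-t) • L) - Matrix.of (fun _ j => xi j)) ≤
        c * Real.exp (-β * t)) ∧
    -- in particular: every solution of θ̇ = −Lθ converges exponentially to (ξᵀθ(0)) 1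
    (∀ θ : ℝ → (Fin N → ℝ),
      (∀ t ≥ (0:ℝ), ∀ i, HasDerivAt (fun s => θ s i) (-(∑ k, L i k * θ t k)) t) →
      ∃ c > (0:ℝ), ∃ β > (0:ℝ), ∀ t ≥ (0:ℝ),
        vnorm (θ t - fun _ => ∑ k, xi k * θ 0 k) ≤ c * Real.exp (-β * t)) := by
  haveI : NeZero N := ⟨by omega⟩
  obtain ⟨β, hβ, C, hC, hkey⟩ := key_bound a L ha_nonneg ha_diag hLdef hconn xi hxiL hxi1
  -- entrywise bound on exp(-tL) - 1ξᵀ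
  have hentry : ∀ t : ℝ, 0 ≤ t → ∀ i j : Fin N,
      |(NormedSpace.exp ((-t) • L)) i j - xi j| ≤ C * Real.exp (-β * t) := by
    intro t ht i j
    have h1 := hkey t ht (Pi.single j 1) i
    have h2 : ((NormedSpace.exp ((-t) • L)).mulVec (Pi.single j 1)) i
        = (NormedSpace.exp ((-t) • L)) i j := by
      simp [Matrix.mulVec, dotProduct, Pi.single_apply, mul_ite]
    have h3 : ∑ k, xi k * (Pi.single j 1 : Fin N → ℝ) k = xi j := by
      simp [Pi.single_apply, mul_ite]
    have h4 : osc (Pi.single j 1 : Fin N → ℝ) ≤ 1 := by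
      have hmax : vmax (Pi.single j 1 : Fin N → ℝ) ≤ 1 := vmax_le fun k => by
        by_cases hk : k = j <;> simp [Pi.single_apply, hk]
      have hmin : (0:ℝ) ≤ vmin (Pi.single j 1 : Fin N → ℝ) := le_vmin fun k => by
        by_cases hk : k = j <;> simp [Pi.single_apply, hk]
      unfold osc; linarith
    rw [h2, h3] at h1
    calc |(NormedSpace.exp ((-t) • L)) i j - xi j|
        ≤ C * osc (Pi.single j 1 : Fin N → ℝ) * Real.exp (-β * t) := h1
    _ ≤ C * 1 * Real.exp (-β * t) := by
        have := mul_le_mul_of_nonneg_left h4 hC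
        exact mul_le_mul_of_nonneg_right this (Real.exp_pos _).le
    _ = C * Real.exp (-β * t) := by ring
  constructor
  · refine ⟨(N:ℝ) * C + 1, by positivity, β, hβ, ?_⟩
    intro t ht
    set K := C * Real.exp (-β * t) with hK
    set D : Matrix (Fin N) (Fin N) ℝ :=
      NormedSpace.exp ((-t) • L) - Matrix.of (fun _ j => xi j) with hD
    have hK0 : 0 ≤ K := mul_nonneg hC (Real.exp_pos _).le
    have hsq : ∀ i j : Fin N, (D i j) ^ 2 ≤ K ^ 2 := by
      intro i j
      have h := hentry t ht i j
      have habs : |D i j| ≤ K := by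
        rw [hK, hD]
        simpa [Matrix.sub_apply, Matrix.of_apply, neg_mul] using h
      calc (D i j) ^ 2 = |D i j| ^ 2 := (sq_abs _).symm
      _ ≤ K ^ 2 := pow_le_pow_left₀ (abs_nonneg _) habs 2
    have hsum : ∑ i, ∑ j, (D i j) ^ 2 ≤ ((N:ℝ) * K) ^ 2 := by
      calc ∑ i, ∑ j, (D i j) ^ 2
          ≤ ∑ _i : Fin N, ∑ _j : Fin N, K ^ 2 :=
        Finset.sum_le_sum fun i _ => Finset.sum_le_sum fun j _ => hsq i j
      _ = (N:ℝ) * ((N:ℝ) * K ^ 2) := by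
        simp [Finset.sum_const, Finset.card_univ, mul_comm]
      _ ≤ ((N:ℝ) * K) ^ 2 := by nlinarith [Nat.cast_nonneg (α := ℝ) N]
    have hnorm : mnorm D ≤ (N:ℝ) * K := by
      unfold mnorm
      calc Real.sqrt (∑ i, ∑ j, (D i j) ^ 2)
          ≤ Real.sqrt (((N:ℝ) * K) ^ 2) := Real.sqrt_le_sqrt hsum
      _ = (N:ℝ) * K := Real.sqrt_sq (by positivity)
    calc mnorm D ≤ (N:ℝ) * K := hnorm
    _ = ((N:ℝ) * C) * Real.exp (-β * t) := by rw [hK]; ring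
    _ ≤ ((N:ℝ) * C + 1) * Real.exp (-β * t) := by
      have := (Real.exp_pos (-β * t)).le
      nlinarith
  · intro θ hθ
    -- the solution is given by the matrix exponential
    have hsol : ∀ T : ℝ, 0 ≤ T → (NormedSpace.exp (T • L)).mulVec (θ T) = θ 0 := by
      intro T hT
      funext i
      set g : ℝ → ℝ := fun u => ∑ k, (NormedSpace.exp (u • L)) i k * θ u k with hg
      have hg' : ∀ u : ℝ, 0 ≤ u → HasDerivAt g 0 u := by
        intro u hu
        have hterm : ∀ k : Fin N, HasDerivAt (fun s => (NormedSpace.exp (s • L)) i k * θ s k)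
            ((NormedSpace.exp (u • L) * L) i k * θ u k
              + (NormedSpace.exp (u • L)) i k * (-(∑ m, L k m * θ u m))) u :=
          fun k => (exp_smul_entry_hasDerivAt L u i k).mul (hθ u hu k)
        have hsum := HasDerivAt.fun_sum (fun k (_ : k ∈ Finset.univ) => hterm k)
        have hzero : ∑ k, ((NormedSpace.exp (u • L) * L) i k * θ u k
            + (NormedSpace.exp (u • L)) i k * (-(∑ m, L k m * θ u m))) = 0 := by
          have e1 : ∑ k, (NormedSpace.exp (u • L) * L) i k * θ u k
              = ∑ k, ∑ m, NormedSpace.exp (u • L) i m * (L m k * θ u k) := by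
            refine Finset.sum_congr rfl fun k _ => ?_
            rw [Matrix.mul_apply, Finset.sum_mul]
            exact Finset.sum_congr rfl fun m _ => by ring
          have e2 : ∑ k, (NormedSpace.exp (u • L)) i k * (-(∑ m, L k m * θ u m))
              = -∑ k, ∑ m, NormedSpace.exp (u • L) i k * (L k m * θ u m) := by
            rw [← Finset.sum_neg_distrib]
            refine Finset.sum_congr rfl fun k _ => ?_
            rw [mul_neg, Finset.mul_sum]
          have e3 : (∑ k, ∑ m, NormedSpace.exp (u • L) i k * (L k m * θ u m))
              = ∑ k, ∑ m, NormedSpace.exp (u • L) i m * (L m k * θ u k) := Finset.sum_comm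
          rw [Finset.sum_add_distrib, e1, e2, e3]
          ring
        rw [hzero] at hsum
        exact hsum
      have hconst := constant_of_has_deriv_right_zero (f := g) (a := 0) (b := T)
        (fun u hu => (hg' u hu.1).continuousAt.continuousWithinAt)
        (fun u hu => (hg' u hu.1).hasDerivWithinAt)
      have hT0 : g T = g 0 := hconst T (Set.mem_Icc.mpr ⟨hT, le_refl T⟩)
      have hg0 : g 0 = θ 0 i := by
        rw [hg]
        simp [zero_smul, NormedSpace.exp_zero, Matrix.one_apply]
      have : g T = θ 0 i := hT0.trans hg0
      simpa [Matrix.mulVec, dotProduct, hg] using this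
    have hsol2 : ∀ T : ℝ, 0 ≤ T → θ T = (NormedSpace.exp ((-T) • L)).mulVec (θ 0) := by
      intro T hT
      rw [← hsol T hT, Matrix.mulVec_mulVec]
      have hcomm : Commute ((-T) • L) (T • L) := ((Commute.refl L).smul_left _).smul_right _
      have hinv : NormedSpace.exp ((-T) • L) * NormedSpace.exp (T • L) = 1 := by
        have h := (Matrix.exp_add_of_commute _ _ hcomm).symm
        have hzero : (-T) • L + T • L = 0 := by module
        rw [hzero, NormedSpace.exp_zero] at h
        exact h
      rw [hinv, Matrix.one_mulVec]
    refine ⟨Real.sqrt N * (C * osc (θ 0)) + 1, by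
      have hX : 0 ≤ Real.sqrt N * (C * osc (θ 0)) :=
        mul_nonneg (Real.sqrt_nonneg _) (mul_nonneg hC (osc_nonneg _))
      linarith, β, hβ, ?_⟩
    intro t ht
    set w : Fin N → ℝ := θ t - fun _ => ∑ k, xi k * θ 0 k with hw
    have hb : ∀ i : Fin N, |θ t i - ∑ k, xi k * θ 0 k| ≤ C * osc (θ 0) * Real.exp (-β * t) := by
      intro i
      have h := hkey t ht (θ 0) i
      rw [← hsol2 t ht] at h
      exact h
    have hK0 : 0 ≤ C * osc (θ 0) * Real.exp (-β * t) := by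
      have := osc_nonneg (θ 0); positivity
    have hterm : ∀ i : Fin N, (w i) ^ 2 ≤ (C * osc (θ 0) * Real.exp (-β * t)) ^ 2 := by
      intro i
      have habs : |w i| ≤ C * osc (θ 0) * Real.exp (-β * t) := by
        rw [hw]
        simpa [Pi.sub_apply] using hb i
      calc (w i) ^ 2 = |w i| ^ 2 := (sq_abs _).symm
      _ ≤ (C * osc (θ 0) * Real.exp (-β * t)) ^ 2 := pow_le_pow_left₀ (abs_nonneg _) habs 2
    have hsum : ∑ i, (w i) ^ 2 ≤ (N:ℝ) * (C * osc (θ 0) * Real.exp (-β * t)) ^ 2 := by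
      have h1 : ∑ i, (w i) ^ 2 ≤ ∑ _i : Fin N, (C * osc (θ 0) * Real.exp (-β * t)) ^ 2 :=
        Finset.sum_le_sum fun i _ => hterm i
      simpa [Finset.sum_const, Finset.card_univ, nsmul_eq_mul] using h1
    have hstep : vnorm w ≤ Real.sqrt ((N:ℝ) * (C * osc (θ 0) * Real.exp (-β * t)) ^ 2) := by
      unfold vnorm
      exact Real.sqrt_le_sqrt hsum
    calc vnorm w
        ≤ Real.sqrt ((N:ℝ) * (C * osc (θ 0) * Real.exp (-β * t)) ^ 2) := hstep
    _ = Real.sqrt N * (C * osc (θ 0) * Real.exp (-β * t)) := by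
      rw [Real.sqrt_mul (Nat.cast_nonneg N), Real.sqrt_sq hK0]
    _ = (Real.sqrt N * (C * osc (θ 0))) * Real.exp (-β * t) := by ring
    _ ≤ (Real.sqrt N * (C * osc (θ 0)) + 1) * Real.exp (-β * t) := by
      have := (Real.exp_pos (-β * t)).le
      nlinarith
end

section
/- Let L ∈ ℝ^{N×N} be the Laplacian of a strongly connected weighted digraph. Then 0 is a simple eigenvalue of L; more precisely, there exists exactly one vector ξ ∈ ℝ^N satisfying ξᵀL = 0 and ξᵀ1 = 1, and this vector is entrywise strictly positive: ξ_i > 0 for every i = 1, …, N. -/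
open scoped BigOperators

section Aux
variable {N : ℕ} {a : Fin N → Fin N → ℝ} {L : Matrix (Fin N) (Fin N) ℝ}

lemma aux_col (hLdef : ∀ i j, L i j = if i = j then ∑ k, a i k else -(a i j))
    (ha_diag : ∀ i, a i i = 0) (ξ : Fin N → ℝ) (j : Fin N) :
    ∑ k, ξ k * L k j = ξ j * (∑ m, a j m) - ∑ k, ξ k * a k j := by
  have h : ∀ k, ξ k * L k j
      = (if k = j then ξ k * (∑ m, a k m) else 0) - ξ k * a k j := by
    intro k
    rw [hLdef]
    by_cases h : k = j
    · subst h; simp [ha_diag]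
    · simp [h]
  simp only [h, Finset.sum_sub_distrib]
  rw [Finset.sum_ite_eq' Finset.univ j (fun k => ξ k * (∑ m, a k m))]
  simp

lemma aux_row (hLdef : ∀ i j, L i j = if i = j then ∑ k, a i k else -(a i j))
    (ha_diag : ∀ i, a i i = 0) (k : Fin N) :
    ∑ j, L k j = 0 := by
  have h : ∀ j, L k j = (if k = j then ∑ m, a k m else 0) - a k j := by
    intro j
    rw [hLdef]
    by_cases h : k = j
    · subst h; simp [ha_diag]
    · simp [h]
  simp only [h, Finset.sum_sub_distrib]
  rw [Finset.sum_ite_eq Finset.univ k (fun _ => ∑ m, a k m)]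
  simp

lemma aux_pos (ha_nonneg : ∀ i j, 0 ≤ a i j) (ha_diag : ∀ i, a i i = 0)
    (hLdef : ∀ i j, L i j = if i = j then ∑ k, a i k else -(a i j))
    (hconn : ∀ S : Finset (Fin N), S.Nonempty → S ≠ Finset.univ →
      ∃ i ∈ S, ∃ j, j ∉ S ∧ 0 < a i j)
    (ξ : Fin N → ℝ) (hnull : ∀ j, ∑ k, ξ k * L k j = 0)
    (hξnn : ∀ i, 0 ≤ ξ i) (hne : ξ ≠ 0) : ∀ i, 0 < ξ i := by
  by_contra hcon
  push_neg at hcon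
  obtain ⟨j0, hj0⟩ := hcon
  set S := Finset.univ.filter (fun i => 0 < ξ i) with hS
  have hSne : S.Nonempty := by
    obtain ⟨i, hi⟩ : ∃ i, ξ i ≠ 0 := by
      by_contra h; push_neg at h; exact hne (funext h)
    exact ⟨i, by simp [hS, lt_of_le_of_ne (hξnn i) (Ne.symm hi)]⟩
  have hSne' : S ≠ Finset.univ := by
    intro h
    have hj0' : j0 ∈ S := h ▸ Finset.mem_univ j0
    rw [hS, Finset.mem_filter] at hj0'
    linarith [hj0'.2]
  obtain ⟨i, hiS, j, hjS, hij⟩ := hconn S hSne hSne'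
  have hξi : 0 < ξ i := by
    rw [hS, Finset.mem_filter] at hiS; exact hiS.2
  have hξj : ξ j = 0 := by
    have h1 : ¬ 0 < ξ j := by
      intro h; exact hjS (by simp [hS, h])
    linarith [hξnn j]
  have hcol := aux_col hLdef ha_diag ξ j
  rw [hnull j, hξj, zero_mul] at hcol
  have hsum : ∑ k, ξ k * a k j = 0 := by linarith
  have hterm : ξ i * a i j = 0 :=
    (Finset.sum_eq_zero_iff_of_nonneg
      (fun k _ => mul_nonneg (hξnn k) (ha_nonneg k j))).mp hsum i (Finset.mem_univ i)
  exact absurd hterm (ne_of_gt (mul_pos hξi hij))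

lemma aux_sign (ha_nonneg : ∀ i j, 0 ≤ a i j) (ha_diag : ∀ i, a i i = 0)
    (hLdef : ∀ i j, L i j = if i = j then ∑ k, a i k else -(a i j))
    (hconn : ∀ S : Finset (Fin N), S.Nonempty → S ≠ Finset.univ →
      ∃ i ∈ S, ∃ j, j ∉ S ∧ 0 < a i j)
    (ξ : Fin N → ℝ) (hnull : ∀ j, ∑ k, ξ k * L k j = 0) (hne : ξ ≠ 0) :
    (∀ i, 0 < ξ i) ∨ (∀ i, ξ i < 0) := by
  set η : Fin N → ℝ := fun i => |ξ i| with hη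
  have hd : ∀ j, (0:ℝ) ≤ ∑ m, a j m := fun j => Finset.sum_nonneg fun m _ => ha_nonneg j m
  have hfle : ∀ j, ∑ k, η k * L k j ≤ 0 := by
    intro j
    rw [aux_col hLdef ha_diag]
    have h1 : ξ j * (∑ m, a j m) = ∑ k, ξ k * a k j := by
      have h := aux_col hLdef ha_diag ξ j
      rw [hnull j] at h; linarith
    have h2 : η j * (∑ m, a j m) ≤ ∑ k, η k * a k j := by
      calc η j * (∑ m, a j m) = |ξ j * (∑ m, a j m)| := by
              rw [abs_mul, abs_of_nonneg (hd j)]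
        _ = |∑ k, ξ k * a k j| := by rw [h1]
        _ ≤ ∑ k, |ξ k * a k j| := Finset.abs_sum_le_sum_abs _ _
        _ = ∑ k, η k * a k j := by
              refine Finset.sum_congr rfl fun k _ => ?_
              rw [abs_mul, abs_of_nonneg (ha_nonneg k j)]
    linarith
  have hftot : ∑ j, ∑ k, η k * L k j = 0 := by
    rw [Finset.sum_comm]
    refine Finset.sum_eq_zero fun k _ => ?_
    rw [← Finset.mul_sum, aux_row hLdef ha_diag k, mul_zero]
  have hf0 : ∀ j, ∑ k, η k * L k j = 0 := fun j =>
    (Finset.sum_eq_zero_iff_of_nonpos (fun j _ => hfle j)).mp hftot j (Finset.mem_univ j)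
  have hηne : η ≠ 0 := by
    intro h
    apply hne; funext i
    have h2 : η i = 0 := congrFun h i
    simpa [hη, abs_eq_zero] using h2
  have hηpos : ∀ i, 0 < η i :=
    aux_pos ha_nonneg ha_diag hLdef hconn η hf0 (fun i => abs_nonneg _) hηne
  by_cases hp : ∃ i, 0 < ξ i
  · left
    obtain ⟨i0, hi0⟩ := hp
    set ζ : Fin N → ℝ := fun i => η i - ξ i with hζ
    have hζnull : ∀ j, ∑ k, ζ k * L k j = 0 := by
      intro j
      have h : ∑ k, ζ k * L k j = (∑ k, η k * L k j) - (∑ k, ξ k * L k j) := by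
        rw [← Finset.sum_sub_distrib]
        exact Finset.sum_congr rfl fun k _ => by rw [hζ]; ring
      rw [h, hf0 j, hnull j, sub_zero]
    have hζnn : ∀ i, 0 ≤ ζ i := by
      intro i; rw [hζ]; simp [hη]; exact le_abs_self _
    have hζzero : ζ = 0 := by
      by_contra h
      have h2 := aux_pos ha_nonneg ha_diag hLdef hconn ζ hζnull hζnn h i0
      have h3 : ζ i0 = 0 := by rw [hζ]; simp [hη, abs_of_pos hi0]
      linarith
    intro i
    have h4 : η i - ξ i = 0 := congrFun hζzero i
    have h5 := hηpos i
    linarith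
  · right
    push_neg at hp
    intro i
    have h5 := hηpos i
    have h6 : η i = -ξ i := by rw [hη]; exact abs_of_nonpos (hp i)
    linarith

end Aux

/-- The Laplacian of a strongly connected weighted digraph has a unique
normalized left eigenvector for the eigenvalue `0` (`ξᵀL = 0`, `ξᵀ1 = 1`), and this vector
is entrywise strictly positive. -/
theorem left_eigenvector_unique_positive
    (N : ℕ) (hN : 1 ≤ N)
    -- the weighted digraph and its Laplacian
    (a : Fin N → Fin N → ℝ) (L : Matrix (Fin N) (Fin N) ℝ)
    (ha_nonneg : ∀ i j, 0 ≤ a i j) (ha_diag : ∀ i, a i i = 0)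
    (hLdef : ∀ i j, L i j = if i = j then ∑ k, a i k else -(a i j))
    -- strongly connected (irreducible adjacency matrix)
    (hconn : ∀ S : Finset (Fin N), S.Nonempty → S ≠ Finset.univ →
      ∃ i ∈ S, ∃ j, j ∉ S ∧ 0 < a i j) :
    ∃ xi : Fin N → ℝ,
      ((∀ j, ∑ k, xi k * L k j = 0) ∧ (∑ k, xi k = 1) ∧ (∀ i, 0 < xi i)) ∧
      ∀ xi' : Fin N → ℝ,
        (∀ j, ∑ k, xi' k * L k j = 0) → (∑ k, xi' k = 1) → xi' = xi := by
  haveI : Nonempty (Fin N) := ⟨⟨0, by omega⟩⟩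
  have hdet : L.det = 0 := by
    rw [← Matrix.exists_mulVec_eq_zero_iff]
    refine ⟨fun _ => 1, ?_, ?_⟩
    · intro h
      have := congrFun h (Classical.arbitrary (Fin N))
      simp at this
    · funext i
      simp [Matrix.mulVec, dotProduct, aux_row hLdef ha_diag i]
  obtain ⟨ξ0, hξ0ne, hξ0⟩ := Matrix.exists_vecMul_eq_zero_iff.mpr hdet
  have hnull0 : ∀ j, ∑ k, ξ0 k * L k j = 0 := by
    intro j
    have h := congrFun hξ0 j
    simpa [Matrix.vecMul, dotProduct] using h
  have hsign := aux_sign ha_nonneg ha_diag hLdef hconn ξ0 hnull0 hξ0ne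
  set s := ∑ k, ξ0 k with hs
  have hkey : s ≠ 0 ∧ ∀ i, 0 < ξ0 i / s := by
    rcases hsign with hpos | hneg
    · have hspos : 0 < s := Finset.sum_pos (fun i _ => hpos i) Finset.univ_nonempty
      exact ⟨ne_of_gt hspos, fun i => div_pos (hpos i) hspos⟩
    · have hsneg : s < 0 := by
        have : 0 < -s := by
          rw [hs, ← Finset.sum_neg_distrib]
          exact Finset.sum_pos (fun i _ => by linarith [hneg i]) Finset.univ_nonempty
        linarith
      exact ⟨ne_of_lt hsneg, fun i => div_pos_iff.mpr (Or.inr ⟨hneg i, hsneg⟩)⟩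
  obtain ⟨hsne, hquot⟩ := hkey
  refine ⟨fun i => ξ0 i / s, ⟨?_, ?_, hquot⟩, ?_⟩
  · intro j
    have : ∑ k, ξ0 k / s * L k j = (∑ k, ξ0 k * L k j) / s := by
      rw [Finset.sum_div]
      exact Finset.sum_congr rfl fun k _ => by ring
    rw [this, hnull0 j, zero_div]
  · rw [← Finset.sum_div, ← hs, div_self hsne]
  · intro xi' hnull' hsum'
    set δ : Fin N → ℝ := fun i => xi' i - ξ0 i / s with hδ
    have hδnull : ∀ j, ∑ k, δ k * L k j = 0 := by
      intro j
      have h : ∑ k, δ k * L k j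
          = (∑ k, xi' k * L k j) - (∑ k, ξ0 k * L k j) / s := by
        rw [Finset.sum_div, ← Finset.sum_sub_distrib]
        exact Finset.sum_congr rfl fun k _ => by rw [hδ]; ring
      rw [h, hnull' j, hnull0 j, zero_div, sub_zero]
    have hδsum : ∑ k, δ k = 0 := by
      rw [hδ]
      simp only [Finset.sum_sub_distrib]
      rw [← Finset.sum_div, ← hs, div_self hsne, hsum', sub_self]
    have hδ0 : δ = 0 := by
      by_contra h
      rcases aux_sign ha_nonneg ha_diag hLdef hconn δ hδnull h with hposδ | hnegδ
      · have : 0 < ∑ k, δ k := Finset.sum_pos (fun i _ => hposδ i) Finset.univ_nonempty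
        linarith
      · have : 0 < ∑ k, -δ k :=
          Finset.sum_pos (fun i _ => by linarith [hnegδ i]) Finset.univ_nonempty
        rw [Finset.sum_neg_distrib, hδsum] at this
        simp at this
    funext i
    have h := congrFun hδ0 i
    simp only [hδ, Pi.zero_apply] at h
    linarith
end
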